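/- arXiv:1505.07412 — 4 statements merged into one kernel-verified Lean document; each statement's English description precedes it below -/
import Mathlib

section
/- Let H be a real Hilbert space, T : H → H a bounded self-adjoint operator, and x, y ∈ H. Let μ_x and μ_y be spectral measures of T at x and at y respectively. If μ_x and μ_y are mutually singular, then ⟪x, y⟫ = 0. -/
open MeasureTheory RealInnerProductSpace
open Polynomial Filter

set_option maxHeartbeats 1000000
set_option synthInstance.maxHeartbeats 200000

lemma integ_aux (μ : Measure ℝ) [IsFiniteMeasure μ] (R : ℝ)
    (hsupp : μ (Set.Icc (-R) R)ᶜ = 0) (f : ℝ → ℝ) (hf : Continuous f) :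
    Integrable f μ := by
  obtain ⟨C, hC⟩ := (isCompact_Icc (a := -R) (b := R)).exists_bound_of_continuousOn
    hf.continuousOn
  refine (integrable_const C).mono' hf.aestronglyMeasurable ?_
  have hae : ∀ᵐ t ∂μ, t ∈ Set.Icc (-R) R := by
    rw [ae_iff]; exact hsupp
  filter_upwards [hae] with t ht using hC t ht

lemma aeval_monomial_clm {H : Type*} [NormedAddCommGroup H] [InnerProductSpace ℝ H]
    (T : H →L[ℝ] H) (n : ℕ) (a : ℝ) :
    (aeval T (monomial n a)) = a • (T ^ n) := by
  ext v
  simp [aeval_monomial, ContinuousLinearMap.mul_apply, Algebra.algebraMap_eq_smul_one]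

lemma moment_aux {H : Type*} [NormedAddCommGroup H] [InnerProductSpace ℝ H]
    (T : H →L[ℝ] H) (z : H) (μ : Measure ℝ) [IsFiniteMeasure μ] (R : ℝ)
    (hsupp : μ (Set.Icc (-R) R)ᶜ = 0)
    (hz : ∀ k : ℕ, ⟪(T ^ k) z, z⟫ = ∫ t, t ^ k ∂μ) (p : ℝ[X]) :
    ⟪(aeval T p) z, z⟫ = ∫ t, p.eval t ∂μ := by
  induction p using Polynomial.induction_on' with
  | add p q hp hq =>
      rw [map_add, ContinuousLinearMap.add_apply, inner_add_left, hp, hq,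
        ← integral_add (integ_aux μ R hsupp _ (Polynomial.continuous p))
          (integ_aux μ R hsupp _ (Polynomial.continuous q))]
      simp [eval_add]
  | monomial n a =>
      rw [aeval_monomial_clm, ContinuousLinearMap.smul_apply, real_inner_smul_left, hz n,
        ← integral_const_mul]
      simp [eval_monomial]

lemma sa_aux {H : Type*} [NormedAddCommGroup H] [InnerProductSpace ℝ H] [CompleteSpace H]
    (T : H →L[ℝ] H) (hT : IsSelfAdjoint T) (p : ℝ[X]) :
    IsSelfAdjoint (aeval T p) := by
  induction p using Polynomial.induction_on' with
  | add p q hp hq => rw [map_add]; exact hp.add hq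
  | monomial n a =>
      rw [aeval_monomial_clm]
      rw [IsSelfAdjoint, star_smul, star_trivial, (hT.pow n).star_eq]

lemma normsq_aux {H : Type*} [NormedAddCommGroup H] [InnerProductSpace ℝ H] [CompleteSpace H]
    (T : H →L[ℝ] H) (hT : IsSelfAdjoint T) (z : H) (μ : Measure ℝ) [IsFiniteMeasure μ] (R : ℝ)
    (hsupp : μ (Set.Icc (-R) R)ᶜ = 0)
    (hz : ∀ k : ℕ, ⟪(T ^ k) z, z⟫ = ∫ t, t ^ k ∂μ) (p : ℝ[X]) :
    ‖(aeval T p) z‖ ^ 2 = ∫ t, (p.eval t) ^ 2 ∂μ := by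
  have hsym := (sa_aux T hT p).isSymmetric
  have h1 : ⟪(aeval T p) ((aeval T p) z), z⟫ = ⟪(aeval T p) z, (aeval T p) z⟫ :=
    hsym ((aeval T p) z) z
  have h2 : (aeval T (p * p)) z = (aeval T p) ((aeval T p) z) := by rw [map_mul]; rfl
  have h3 := moment_aux T z μ R hsupp hz (p * p)
  rw [h2, h1] at h3
  rw [← real_inner_self_eq_norm_sq, h3]
  simp only [eval_mul, sq]


/-- Proposition 1.6(b): if `μx`, `μy` are spectral measures of the bounded self-adjoint
operator `T` at `x` and at `y`, and `μx`, `μy` are mutually singular, then `⟪x, y⟫ = 0`. -/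
theorem stmt1 {H : Type*} [NormedAddCommGroup H] [InnerProductSpace ℝ H] [CompleteSpace H]
    (T : H →L[ℝ] H) (hT : IsSelfAdjoint T) (x y : H)
    (μx μy : Measure ℝ) [IsFiniteMeasure μx] [IsFiniteMeasure μy]
    (Rx : ℝ) (hμxsupp : μx (Set.Icc (-Rx) Rx)ᶜ = 0)
    (Ry : ℝ) (hμysupp : μy (Set.Icc (-Ry) Ry)ᶜ = 0)
    (hx : ∀ k : ℕ, ⟪(T ^ k) x, x⟫ = ∫ t, t ^ k ∂μx)
    (hy : ∀ k : ℕ, ⟪(T ^ k) y, y⟫ = ∫ t, t ^ k ∂μy)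
    (hsing : μx ⟂ₘ μy) :
    ⟪x, y⟫ = 0 := by
  set R : ℝ := max 1 (max Rx Ry) with hRdef
  have hRx : Rx ≤ R := le_trans (le_max_left Rx Ry) (le_max_right 1 _)
  have hRy : Ry ≤ R := le_trans (le_max_right Rx Ry) (le_max_right 1 _)
  have hμx : μx (Set.Icc (-R) R)ᶜ = 0 :=
    measure_mono_null (Set.compl_subset_compl.mpr (Set.Icc_subset_Icc (neg_le_neg hRx) hRx))
      hμxsupp
  have hμy : μy (Set.Icc (-R) R)ᶜ = 0 :=
    measure_mono_null (Set.compl_subset_compl.mpr (Set.Icc_subset_Icc (neg_le_neg hRy) hRy))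
      hμysupp
  have haex : ∀ᵐ t ∂μx, t ∈ Set.Icc (-R) R := by rw [ae_iff]; exact hμx
  have haey : ∀ᵐ t ∂μy, t ∈ Set.Icc (-R) R := by rw [ae_iff]; exact hμy
  set mx : ℝ := (μx Set.univ).toReal with hmxdef
  set my : ℝ := (μy Set.univ).toReal with hmydef
  have hmx0 : 0 ≤ mx := ENNReal.toReal_nonneg
  have hmy0 : 0 ≤ my := ENNReal.toReal_nonneg
  set A : ℝ := ‖y‖ * Real.sqrt (4 + mx) + ‖x‖ * Real.sqrt (4 + my) with hAdef
  obtain ⟨s, hs, hxs, hys⟩ := hsing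
  have key : ∀ δ : ℝ, δ ∈ Set.Ioc (0:ℝ) 1 → |⟪x, y⟫| ≤ A * Real.sqrt δ := by
    rintro δ ⟨hδ0, hδ1⟩
    have hδ' : (ENNReal.ofReal δ) ≠ 0 := (ENNReal.ofReal_pos.mpr hδ0).ne'
    -- compact K ⊆ s with μy (s \ K) small
    obtain ⟨K, hKs, hKc, hKlt⟩ := hs.exists_isCompact_lt_add (measure_ne_top μy s) hδ'
    have hdiff : μy (s \ K) < ENNReal.ofReal δ :=
      measure_diff_lt_of_lt_add hKc.measurableSet.nullMeasurableSet hKs (measure_ne_top μy K) hKlt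
    have hyK : μy Kᶜ ≤ ENNReal.ofReal δ := by
      have hsub : Kᶜ ⊆ sᶜ ∪ (s \ K) := by
        intro t ht
        by_cases h : t ∈ s
        · exact Or.inr ⟨h, ht⟩
        · exact Or.inl h
      calc μy Kᶜ ≤ μy (sᶜ ∪ (s \ K)) := measure_mono hsub
        _ ≤ μy sᶜ + μy (s \ K) := measure_union_le _ _
        _ ≤ ENNReal.ofReal δ := by rw [hys, zero_add]; exact hdiff.le
    have hxK : μx K = 0 := measure_mono_null hKs hxs
    obtain ⟨U, hKU, hUo, hμU⟩ := K.exists_isOpen_lt_of_lt (ENNReal.ofReal δ)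
      (by rw [hxK]; exact ENNReal.ofReal_pos.mpr hδ0)
    -- Urysohn
    obtain ⟨g, hgK, hgU, hg01⟩ := exists_continuous_zero_one_of_isCompact hKc
      hUo.isClosed_compl (Set.disjoint_compl_right_iff_subset.mpr hKU)
    set f : ℝ → ℝ := fun t => 1 - g t with hfdef
    have hfc : Continuous f := continuous_const.sub g.continuous
    obtain ⟨p, hp⟩ := exists_polynomial_near_of_continuousOn (-R) R f hfc.continuousOn δ hδ0
    -- bounds on the two integrals
    have htoU : (μx U).toReal ≤ δ := ENNReal.toReal_le_of_le_ofReal hδ0.le hμU.le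
    have htoK : (μy Kᶜ).toReal ≤ δ := ENNReal.toReal_le_of_le_ofReal hδ0.le hyK
    have hIx : ∫ t, (p.eval t) ^ 2 ∂μx ≤ (4 + mx) * δ := by
      have hint1 : Integrable (fun t => (p.eval t) ^ 2) μx :=
        integ_aux μx R hμx _ ((Polynomial.continuous p).pow 2)
      have hint2 : Integrable (fun t => Set.indicator U (fun _ => (4:ℝ)) t + δ ^ 2) μx :=
        ((integrable_const (4:ℝ)).indicator hUo.measurableSet).add (integrable_const _)
      have hmono : ∫ t, (p.eval t) ^ 2 ∂μx
          ≤ ∫ t, Set.indicator U (fun _ => (4:ℝ)) t + δ ^ 2 ∂μx := by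
        refine integral_mono_ae hint1 hint2 ?_
        filter_upwards [haex] with t ht
        have h1 := abs_lt.mp (hp t ht)
        have hg := hg01 t
        by_cases htU : t ∈ U
        · rw [Set.indicator_of_mem htU]
          simp only [hfdef] at h1
          nlinarith [hg.1, hg.2, h1.1, h1.2]
        · rw [Set.indicator_of_notMem htU]
          have hgt : g t = 1 := hgU htU
          simp only [hfdef, hgt] at h1
          nlinarith [h1.1, h1.2]
      have hval : ∫ t, Set.indicator U (fun _ => (4:ℝ)) t + δ ^ 2 ∂μx
          = (μx U).toReal * 4 + mx * δ ^ 2 := by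
        rw [integral_add ((integrable_const (4:ℝ)).indicator hUo.measurableSet)
          (integrable_const _), integral_indicator_const _ hUo.measurableSet, integral_const]
        simp [smul_eq_mul, hmxdef]
        rfl
      rw [hval] at hmono
      have h5 : mx * δ ^ 2 ≤ mx * δ := by nlinarith [mul_nonneg hmx0 (mul_nonneg hδ0.le (sub_nonneg.mpr hδ1))]
      linarith
    have hIy : ∫ t, (1 - p.eval t) ^ 2 ∂μy ≤ (4 + my) * δ := by
      have hc : Continuous (fun t => (1 - p.eval t) ^ 2) :=
        (continuous_const.sub (Polynomial.continuous p)).pow 2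
      have hint1 : Integrable (fun t => (1 - p.eval t) ^ 2) μy := integ_aux μy R hμy _ hc
      have hKm : MeasurableSet Kᶜ := hKc.measurableSet.compl
      have hint2 : Integrable (fun t => Set.indicator Kᶜ (fun _ => (4:ℝ)) t + δ ^ 2) μy :=
        ((integrable_const (4:ℝ)).indicator hKm).add (integrable_const _)
      have hmono : ∫ t, (1 - p.eval t) ^ 2 ∂μy
          ≤ ∫ t, Set.indicator Kᶜ (fun _ => (4:ℝ)) t + δ ^ 2 ∂μy := by
        refine integral_mono_ae hint1 hint2 ?_
        filter_upwards [haey] with t ht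
        have h1 := abs_lt.mp (hp t ht)
        have hg := hg01 t
        by_cases htK : t ∈ K
        · rw [Set.indicator_of_notMem (by simpa using htK)]
          have hgt : g t = 0 := hgK htK
          simp only [hfdef, hgt] at h1
          nlinarith [h1.1, h1.2]
        · rw [Set.indicator_of_mem (by simpa using htK)]
          simp only [hfdef] at h1
          nlinarith [hg.1, hg.2, h1.1, h1.2]
      have hval : ∫ t, Set.indicator Kᶜ (fun _ => (4:ℝ)) t + δ ^ 2 ∂μy
          = (μy Kᶜ).toReal * 4 + my * δ ^ 2 := by
        rw [integral_add ((integrable_const (4:ℝ)).indicator hKm)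
          (integrable_const _), integral_indicator_const _ hKm, integral_const]
        simp [smul_eq_mul, hmydef]
        rfl
      rw [hval] at hmono
      have h5 : my * δ ^ 2 ≤ my * δ := by nlinarith [mul_nonneg hmy0 (mul_nonneg hδ0.le (sub_nonneg.mpr hδ1))]
      linarith
    -- norm bounds
    have hnx : ‖(aeval T p) x‖ ≤ Real.sqrt (4 + mx) * Real.sqrt δ := by
      have h1 : ‖(aeval T p) x‖ ^ 2 ≤ (4 + mx) * δ := by
        rw [normsq_aux T hT x μx R hμx hx p]; exact hIx
      calc ‖(aeval T p) x‖ = Real.sqrt (‖(aeval T p) x‖ ^ 2) :=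
            (Real.sqrt_sq (norm_nonneg _)).symm
        _ ≤ Real.sqrt ((4 + mx) * δ) := Real.sqrt_le_sqrt h1
        _ = Real.sqrt (4 + mx) * Real.sqrt δ := Real.sqrt_mul (by linarith) δ
    have hny : ‖(aeval T (1 - p)) y‖ ≤ Real.sqrt (4 + my) * Real.sqrt δ := by
      have h1 : ‖(aeval T (1 - p)) y‖ ^ 2 ≤ (4 + my) * δ := by
        rw [normsq_aux T hT y μy R hμy hy (1 - p)]
        calc ∫ t, ((1 - p).eval t) ^ 2 ∂μy = ∫ t, (1 - p.eval t) ^ 2 ∂μy := by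
              simp only [eval_sub, eval_one]
          _ ≤ (4 + my) * δ := hIy
      calc ‖(aeval T (1 - p)) y‖ = Real.sqrt (‖(aeval T (1 - p)) y‖ ^ 2) :=
            (Real.sqrt_sq (norm_nonneg _)).symm
        _ ≤ Real.sqrt ((4 + my) * δ) := Real.sqrt_le_sqrt h1
        _ = Real.sqrt (4 + my) * Real.sqrt δ := Real.sqrt_mul (by linarith) δ
    -- decomposition
    have hsym := (sa_aux T hT (1 - p)).isSymmetric
    have hdec : ⟪x, y⟫ = ⟪(aeval T p) x, y⟫ + ⟪x, (aeval T (1 - p)) y⟫ := by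
      have h2 : ⟪x, (aeval T (1 - p)) y⟫ = ⟪(aeval T (1 - p)) x, y⟫ := (hsym x y).symm
      rw [h2, map_sub, map_one, ContinuousLinearMap.sub_apply, ContinuousLinearMap.one_apply,
        inner_sub_left]
      ring
    have habs : |⟪x, y⟫| ≤ ‖(aeval T p) x‖ * ‖y‖ + ‖x‖ * ‖(aeval T (1 - p)) y‖ := by
      rw [hdec]
      refine (abs_add_le _ _).trans (add_le_add (abs_real_inner_le_norm _ _) ?_)
      rw [real_inner_comm]
      exact (abs_real_inner_le_norm _ _).trans (by rw [mul_comm])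
    calc |⟪x, y⟫| ≤ ‖(aeval T p) x‖ * ‖y‖ + ‖x‖ * ‖(aeval T (1 - p)) y‖ := habs
      _ ≤ (Real.sqrt (4 + mx) * Real.sqrt δ) * ‖y‖
          + ‖x‖ * (Real.sqrt (4 + my) * Real.sqrt δ) := by
          gcongr
      _ = A * Real.sqrt δ := by rw [hAdef]; ring
  -- limit argument
  have hA0 : Tendsto (fun δ : ℝ => A * Real.sqrt δ) (nhdsWithin 0 (Set.Ioi 0)) (nhds 0) := by
    have h1 : Tendsto (fun δ : ℝ => A * Real.sqrt δ) (nhds 0) (nhds (A * Real.sqrt 0)) :=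
      (continuous_const.mul Real.continuous_sqrt).tendsto 0
    simpa using h1.mono_left nhdsWithin_le_nhds
  have hev : ∀ᶠ δ in nhdsWithin (0:ℝ) (Set.Ioi 0), |⟪x, y⟫| ≤ A * Real.sqrt δ := by
    filter_upwards [Ioc_mem_nhdsGT_of_mem (Set.mem_Ico.mpr ⟨le_refl 0, zero_lt_one⟩)] with δ hδ
      using key δ hδ
  have hle : |⟪x, y⟫| ≤ 0 := ge_of_tendsto hA0 hev
  exact abs_nonpos_iff.mp hle
end

section
/- Let H be a real Hilbert space, T : H → H a bounded self-adjoint operator, and x, y ∈ H. Let κ be a finite compactly supported Borel measure on ℝ and let f, g ∈ L¹(κ) be nonnegative functions such that for every integer k ≥ 0 one has ⟪T^k x, x⟫ = ∫ t^k f(t) dκ(t) and ⟪T^k y, y⟫ = ∫ t^k g(t) dκ(t). Then |⟪x, y⟫| ≤ ∫ √(f(t)·g(t)) dκ(t). -/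
set_option maxHeartbeats 1000000
set_option synthInstance.maxHeartbeats 400000

open MeasureTheory RealInnerProductSpace Polynomial
open scoped NNReal ENNReal

lemma stmt2_sqrt_add_le {a b : ℝ} (ha : 0 ≤ a) (hb : 0 ≤ b) :
    Real.sqrt (a + b) ≤ Real.sqrt a + Real.sqrt b := by
  have h1 := Real.sq_sqrt ha
  have h2 := Real.sq_sqrt hb
  have h3 := Real.sqrt_nonneg a
  have h4 := Real.sqrt_nonneg b
  have h : a + b ≤ (Real.sqrt a + Real.sqrt b)^2 := by nlinarith
  calc Real.sqrt (a + b) ≤ Real.sqrt ((Real.sqrt a + Real.sqrt b)^2) := Real.sqrt_le_sqrt h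
    _ = Real.sqrt a + Real.sqrt b := Real.sqrt_sq (by positivity)

lemma stmt2_sqrt_mul_le {a b : ℝ} (ha : 0 ≤ a) (hb : 0 ≤ b) :
    Real.sqrt (a * b) ≤ (a + b) / 2 := by
  nlinarith [Real.sq_sqrt (mul_nonneg ha hb), Real.sqrt_nonneg (a * b), sq_nonneg (a - b),
    sq_nonneg (Real.sqrt (a * b) - (a + b) / 2)]

lemma stmt2_sqrt_ratio {x y : ℝ} (hx : 0 < x) (hy : 0 < y) :
    Real.sqrt (y / x) * x = Real.sqrt (x * y) := by
  rw [Real.sqrt_div hy.le, Real.sqrt_mul hx.le]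
  have hsx : Real.sqrt x ≠ 0 := ne_of_gt (Real.sqrt_pos.mpr hx)
  field_simp
  nlinarith [Real.sq_sqrt hx.le, Real.sqrt_nonneg y, Real.sqrt_nonneg x]

lemma stmt2_div_aux (ε X : ℝ) (hε : ε ≠ 0) : ε/2 * (2*X/ε) = X := by
  field_simp

lemma stmt2_clamp_close {a b w v : ℝ} (hab : a ≤ b) (hw1 : a ≤ w) (hw2 : w ≤ b) :
    |min b (max a v) - w| ≤ |v - w| := by
  have h1 := le_abs_self (v - w)
  have h2 := neg_abs_le (v - w)
  rcases le_total v a with h | h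
  · rw [max_eq_left h, min_eq_right hab, abs_of_nonpos (by linarith)]
    linarith [abs_nonneg (v - w)]
  · rcases le_total v b with h' | h'
    · rw [max_eq_right h, min_eq_right h']
    · rw [max_eq_right h, min_eq_left h', abs_of_nonneg (by linarith)]
      linarith [abs_nonneg (v - w)]

lemma stmt2_stage1 (κ : Measure ℝ) [IsFiniteMeasure κ]
    (f g : ℝ → ℝ) (hfm : Measurable f) (hgm : Measurable g)
    (hf0 : ∀ t, 0 ≤ f t) (hg0 : ∀ t, 0 ≤ g t)
    (hfint : Integrable f κ) (hgint : Integrable g κ) {ε : ℝ} (hε : 0 < ε) :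
    ∃ M : ℝ, 1 ≤ M ∧ ∃ w : ℝ → ℝ, Measurable w ∧ (∀ t, M⁻¹ ≤ w t) ∧ (∀ t, w t ≤ M) ∧
      (∫ t, w t * f t ∂κ) ≤ (∫ t, Real.sqrt (f t * g t) ∂κ) + ε ∧
      (∫ t, (w t)⁻¹ * g t ∂κ) ≤ (∫ t, Real.sqrt (f t * g t) ∂κ) + ε := by
  obtain ⟨C, hCdef⟩ : ∃ C:ℝ, C = (κ Set.univ).toReal := ⟨_, rfl⟩
  obtain ⟨F, hFdef⟩ : ∃ F:ℝ, F = ∫ t, f t ∂κ := ⟨_, rfl⟩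
  obtain ⟨G, hGdef⟩ : ∃ G:ℝ, G = ∫ t, g t ∂κ := ⟨_, rfl⟩
  obtain ⟨I, hIdef⟩ : ∃ I:ℝ, I = ∫ t, Real.sqrt (f t * g t) ∂κ := ⟨_, rfl⟩
  rw [← hIdef]
  have hC0 : 0 ≤ C := hCdef ▸ ENNReal.toReal_nonneg
  have hF0 : 0 ≤ F := hFdef ▸ integral_nonneg hf0
  have hG0 : 0 ≤ G := hGdef ▸ integral_nonneg hg0
  obtain ⟨K, hKdef⟩ : ∃ K:ℝ, K = 3*C + F + G + 1 := ⟨_, rfl⟩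
  have hK0 : 0 < K := by rw [hKdef]; positivity
  obtain ⟨δ, hδdef⟩ : ∃ δ:ℝ, δ = min 1 ((ε/(2*K))^2) := ⟨_, rfl⟩
  have hδ0 : 0 < δ := hδdef ▸ lt_min one_pos (by positivity)
  have hδ1 : δ ≤ 1 := hδdef ▸ min_le_left _ _
  have hsδ : Real.sqrt δ ≤ ε/(2*K) := by
    calc Real.sqrt δ ≤ Real.sqrt ((ε/(2*K))^2) := hδdef ▸ Real.sqrt_le_sqrt (min_le_right _ _)
      _ = ε/(2*K) := Real.sqrt_sq (by positivity)
  have hs1 : Real.sqrt δ ≤ 1 := by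
    rw [show (1:ℝ) = Real.sqrt 1 by simp]
    exact Real.sqrt_le_sqrt hδ1
  have hδδ : δ ≤ Real.sqrt δ := by
    nlinarith [Real.sq_sqrt hδ0.le, Real.sqrt_nonneg δ]
  -- integrability of the sqrt functions
  have hsqint : Integrable (fun t => Real.sqrt ((f t + δ) * (g t + δ))) κ := by
    apply Integrable.mono' (((hfint.add (integrable_const δ)).add
      (hgint.add (integrable_const δ))).div_const 2)
    · exact (((hfm.add measurable_const).mul (hgm.add measurable_const)).sqrt).aestronglyMeasurable
    · filter_upwards with t
      rw [Real.norm_eq_abs, abs_of_nonneg (Real.sqrt_nonneg _)]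
      exact stmt2_sqrt_mul_le (by linarith [hf0 t]) (by linarith [hg0 t])
  have hIsqint : Integrable (fun t => Real.sqrt (f t * g t)) κ := by
    apply Integrable.mono' ((hfint.add hgint).div_const 2)
    · exact ((hfm.mul hgm).sqrt).aestronglyMeasurable
    · filter_upwards with t
      rw [Real.norm_eq_abs, abs_of_nonneg (Real.sqrt_nonneg _)]
      exact stmt2_sqrt_mul_le (hf0 t) (hg0 t)
  -- claim 1 : the δ-perturbed sqrt integral bound
  have claim1 : (∫ t, Real.sqrt ((f t + δ) * (g t + δ)) ∂κ) ≤ I + ε/2 := by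
    have hrhsint : Integrable
        (fun t => Real.sqrt (f t * g t) + (Real.sqrt δ * (2 + f t + g t) + δ)) κ := by
      apply hIsqint.add
      apply Integrable.add _ (integrable_const δ)
      exact (((integrable_const (2:ℝ)).add hfint).add hgint).const_mul _
    have hmono : (∫ t, Real.sqrt ((f t + δ) * (g t + δ)) ∂κ) ≤
        ∫ t, (Real.sqrt (f t * g t) + (Real.sqrt δ * (2 + f t + g t) + δ)) ∂κ := by
      apply integral_mono_of_nonneg (Filter.Eventually.of_forall fun t => Real.sqrt_nonneg _)
        hrhsint
      filter_upwards with t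
      have hf := hf0 t; have hg := hg0 t
      have e1 : (f t + δ) * (g t + δ) = f t * g t + (δ * f t + (δ * g t + δ * δ)) := by ring
      have step1 : Real.sqrt ((f t + δ) * (g t + δ)) ≤
          Real.sqrt (f t * g t) + Real.sqrt (δ * f t + (δ * g t + δ * δ)) := by
        rw [e1]; exact stmt2_sqrt_add_le (by positivity) (by positivity)
      have step2 : Real.sqrt (δ * f t + (δ * g t + δ * δ)) ≤
          Real.sqrt (δ * f t) + (Real.sqrt (δ * g t) + Real.sqrt (δ * δ)) := by
        calc Real.sqrt (δ * f t + (δ * g t + δ * δ))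
            ≤ Real.sqrt (δ * f t) + Real.sqrt (δ * g t + δ * δ) :=
              stmt2_sqrt_add_le (by positivity) (by positivity)
          _ ≤ Real.sqrt (δ * f t) + (Real.sqrt (δ * g t) + Real.sqrt (δ * δ)) := by
              have := stmt2_sqrt_add_le (a := δ * g t) (b := δ * δ) (by positivity) (by positivity)
              linarith
      have hsf : Real.sqrt (f t) ≤ 1 + f t := by
        nlinarith [Real.sq_sqrt hf, Real.sqrt_nonneg (f t), sq_nonneg (Real.sqrt (f t) - 1)]
      have hsg : Real.sqrt (g t) ≤ 1 + g t := by
        nlinarith [Real.sq_sqrt hg, Real.sqrt_nonneg (g t), sq_nonneg (Real.sqrt (g t) - 1)]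
      have e2 : Real.sqrt (δ * f t) = Real.sqrt δ * Real.sqrt (f t) := Real.sqrt_mul hδ0.le _
      have e3 : Real.sqrt (δ * g t) = Real.sqrt δ * Real.sqrt (g t) := Real.sqrt_mul hδ0.le _
      have e4 : Real.sqrt (δ * δ) = δ := Real.sqrt_mul_self hδ0.le
      have hsδ0 : 0 ≤ Real.sqrt δ := Real.sqrt_nonneg δ
      have b1 : Real.sqrt δ * Real.sqrt (f t) ≤ Real.sqrt δ * (1 + f t) :=
        mul_le_mul_of_nonneg_left hsf hsδ0
      have b2 : Real.sqrt δ * Real.sqrt (g t) ≤ Real.sqrt δ * (1 + g t) :=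
        mul_le_mul_of_nonneg_left hsg hsδ0
      have : Real.sqrt δ * (1 + f t) + Real.sqrt δ * (1 + g t) =
          Real.sqrt δ * (2 + f t + g t) := by ring
      linarith [step1, step2]
    have int0 : Integrable (fun t => 2 + f t + g t) κ :=
      ((integrable_const (2:ℝ)).add hfint).add hgint
    have int1 : Integrable (fun t => Real.sqrt δ * (2 + f t + g t)) κ := int0.const_mul _
    have int2 : Integrable (fun t => Real.sqrt δ * (2 + f t + g t) + δ) κ :=
      int1.add (integrable_const δ)
    have intcf : Integrable (fun t => 2 + f t) κ := (integrable_const (2:ℝ)).add hfint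
    have hint2 : (∫ t, (Real.sqrt (f t * g t) + (Real.sqrt δ * (2 + f t + g t) + δ)) ∂κ)
        = I + (Real.sqrt δ * (2*C + F + G) + δ * C) := by
      rw [integral_add hIsqint int2,
        integral_add int1 (integrable_const δ), integral_const_mul _ _,
        integral_add intcf hgint,
        integral_add (integrable_const (2:ℝ)) hfint, integral_const, integral_const]
      simp only [smul_eq_mul, mul_one]
      rw [hIdef, hCdef, hFdef, hGdef]
      simp only [Measure.real]
      ring
    have herr : Real.sqrt δ * (2*C + F + G) + δ * C ≤ ε/2 := by
      have h1 : Real.sqrt δ * (2*C + F + G) + δ * C ≤ Real.sqrt δ * K := by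
        have h0 : δ * C ≤ Real.sqrt δ * C := mul_le_mul_of_nonneg_right hδδ hC0
        have h2 : Real.sqrt δ * (2*C + F + G) + Real.sqrt δ * C ≤ Real.sqrt δ * K := by
          rw [hKdef]
          nlinarith [Real.sqrt_nonneg δ]
        linarith
      have h3 : Real.sqrt δ * K ≤ (ε/(2*K)) * K := mul_le_mul_of_nonneg_right hsδ hK0.le
      have h4 : (ε/(2*K)) * K = ε/2 := by field_simp
      exact h1.trans (h3.trans_eq h4)
    calc (∫ t, Real.sqrt ((f t + δ) * (g t + δ)) ∂κ)
        ≤ ∫ t, (Real.sqrt (f t * g t) + (Real.sqrt δ * (2 + f t + g t) + δ)) ∂κ := hmono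
      _ = I + (Real.sqrt δ * (2*C + F + G) + δ * C) := hint2
      _ ≤ I + ε/2 := add_le_add_right herr I
  -- choose M
  obtain ⟨M, hMdef⟩ : ∃ M:ℝ, M = max 1 (2*(F+G+1)/ε) := ⟨_, rfl⟩
  have hM1 : (1:ℝ) ≤ M := hMdef ▸ le_max_left _ _
  have hM0 : (0:ℝ) < M := lt_of_lt_of_le one_pos hM1
  have hFM : F / M ≤ ε/2 := by
    rw [div_le_iff₀ hM0]
    have h2 : 2*(F+G+1)/ε ≤ M := hMdef ▸ le_max_right _ _
    have h3 : ε/2 * (2*(F+G+1)/ε) = F+G+1 := stmt2_div_aux ε _ (ne_of_gt hε)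
    have h4 : ε/2 * (2*(F+G+1)/ε) ≤ ε/2 * M := mul_le_mul_of_nonneg_left h2 (by positivity)
    nlinarith
  have hGM : G / M ≤ ε/2 := by
    rw [div_le_iff₀ hM0]
    have h2 : 2*(F+G+1)/ε ≤ M := hMdef ▸ le_max_right _ _
    have h3 : ε/2 * (2*(F+G+1)/ε) = F+G+1 := stmt2_div_aux ε _ (ne_of_gt hε)
    have h4 : ε/2 * (2*(F+G+1)/ε) ≤ ε/2 * M := mul_le_mul_of_nonneg_left h2 (by positivity)
    nlinarith
  -- the weight function
  set a : ℝ → ℝ := fun t => Real.sqrt ((g t + δ) / (f t + δ)) with hadef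
  have hap : ∀ t, 0 < a t := fun t =>
    Real.sqrt_pos.mpr (div_pos (by linarith [hg0 t]) (by linarith [hf0 t]))
  set w : ℝ → ℝ := fun t => min M (max M⁻¹ (a t)) with hwdef
  have hwm : Measurable w := by
    apply Measurable.min measurable_const
    apply Measurable.max measurable_const
    exact ((hgm.add measurable_const).div (hfm.add measurable_const)).sqrt
  have hMinvM : M⁻¹ ≤ M := by
    have h1 : M⁻¹ ≤ 1 := inv_le_one_of_one_le₀ hM1
    linarith
  have hwlb : ∀ t, M⁻¹ ≤ w t := fun t => le_min hMinvM (le_max_left _ _)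
  have hwub : ∀ t, w t ≤ M := fun t => min_le_left _ _
  have hwp : ∀ t, 0 < w t := fun t => lt_of_lt_of_le (by positivity) (hwlb t)
  refine ⟨M, hM1, w, hwm, hwlb, hwub, ?_, ?_⟩
  · -- ∫ w f ≤ I + ε
    have hpt : ∀ t, w t * f t ≤ f t / M + Real.sqrt ((f t + δ) * (g t + δ)) := by
      intro t
      have hfd : (0:ℝ) < f t + δ := by linarith [hf0 t]
      have key : a t * (f t + δ) = Real.sqrt ((f t + δ) * (g t + δ)) := by
        rw [hadef]
        exact stmt2_sqrt_ratio hfd (by linarith [hg0 t])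
      have haf : a t * f t ≤ Real.sqrt ((f t + δ) * (g t + δ)) := by
        rw [← key]
        exact mul_le_mul_of_nonneg_left (by linarith) (hap t).le
      have hw2 : w t ≤ M⁻¹ + a t := by
        refine (min_le_right _ _).trans (max_le ?_ ?_)
        · exact le_add_of_nonneg_right (hap t).le
        · exact le_add_of_nonneg_left (by positivity)
      calc w t * f t ≤ (M⁻¹ + a t) * f t := mul_le_mul_of_nonneg_right hw2 (hf0 t)
        _ = M⁻¹ * f t + a t * f t := by ring
        _ ≤ f t / M + Real.sqrt ((f t + δ) * (g t + δ)) := by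
            rw [div_eq_inv_mul]; linarith
    have hrhs : Integrable (fun t => f t / M + Real.sqrt ((f t + δ) * (g t + δ))) κ :=
      (hfint.div_const M).add hsqint
    have h1 : (∫ t, w t * f t ∂κ) ≤ ∫ t, (f t / M + Real.sqrt ((f t + δ) * (g t + δ))) ∂κ := by
      apply integral_mono_of_nonneg
        (Filter.Eventually.of_forall fun t => mul_nonneg (hwp t).le (hf0 t)) hrhs
      exact Filter.Eventually.of_forall hpt
    have h2 : (∫ t, (f t / M + Real.sqrt ((f t + δ) * (g t + δ))) ∂κ)
        = F/M + ∫ t, Real.sqrt ((f t + δ) * (g t + δ)) ∂κ := by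
      rw [integral_add (hfint.div_const M) hsqint, integral_div, hFdef]
    calc (∫ t, w t * f t ∂κ) ≤ F/M + ∫ t, Real.sqrt ((f t + δ) * (g t + δ)) ∂κ := h1.trans_eq h2
      _ ≤ ε/2 + (I + ε/2) := add_le_add hFM claim1
      _ = I + ε := by ring
  · -- ∫ w⁻¹ g ≤ I + ε
    have hpt : ∀ t, (w t)⁻¹ * g t ≤ g t / M + Real.sqrt ((f t + δ) * (g t + δ)) := by
      intro t
      have hgd : (0:ℝ) < g t + δ := by linarith [hg0 t]
      have hfd : (0:ℝ) < f t + δ := by linarith [hf0 t]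
      have hainv : (a t)⁻¹ = Real.sqrt ((f t + δ) / (g t + δ)) := by
        rw [hadef, ← Real.sqrt_inv, inv_div]
      have key : (a t)⁻¹ * (g t + δ) = Real.sqrt ((f t + δ) * (g t + δ)) := by
        rw [hainv, stmt2_sqrt_ratio hgd hfd, mul_comm (g t + δ) (f t + δ)]
      have hag : (a t)⁻¹ * g t ≤ Real.sqrt ((f t + δ) * (g t + δ)) := by
        rw [← key]
        exact mul_le_mul_of_nonneg_left (by linarith) (by positivity)
      have hw2 : (w t)⁻¹ ≤ M⁻¹ + (a t)⁻¹ := by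
        have hmin : min M (a t) ≤ w t := min_le_min (le_refl M) (le_max_right _ _)
        have hminpos : 0 < min M (a t) := lt_min hM0 (hap t)
        have h5 : (w t)⁻¹ ≤ (min M (a t))⁻¹ := inv_anti₀ hminpos hmin
        rcases min_cases M (a t) with ⟨he, _⟩ | ⟨he, _⟩
        · rw [he] at h5; exact h5.trans (le_add_of_nonneg_right (by positivity))
        · rw [he] at h5; exact h5.trans (le_add_of_nonneg_left (by positivity))
      calc (w t)⁻¹ * g t ≤ (M⁻¹ + (a t)⁻¹) * g t := mul_le_mul_of_nonneg_right hw2 (hg0 t)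
        _ = M⁻¹ * g t + (a t)⁻¹ * g t := by ring
        _ ≤ g t / M + Real.sqrt ((f t + δ) * (g t + δ)) := by
            rw [div_eq_inv_mul]; linarith
    have hrhs : Integrable (fun t => g t / M + Real.sqrt ((f t + δ) * (g t + δ))) κ :=
      (hgint.div_const M).add hsqint
    have h1 : (∫ t, (w t)⁻¹ * g t ∂κ) ≤
        ∫ t, (g t / M + Real.sqrt ((f t + δ) * (g t + δ))) ∂κ := by
      apply integral_mono_of_nonneg
        (Filter.Eventually.of_forall fun t => mul_nonneg (by positivity) (hg0 t)) hrhs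
      exact Filter.Eventually.of_forall hpt
    have h2 : (∫ t, (g t / M + Real.sqrt ((f t + δ) * (g t + δ))) ∂κ)
        = G/M + ∫ t, Real.sqrt ((f t + δ) * (g t + δ)) ∂κ := by
      rw [integral_add (hgint.div_const M) hsqint, integral_div, hGdef]
    calc (∫ t, (w t)⁻¹ * g t ∂κ) ≤ G/M + ∫ t, Real.sqrt ((f t + δ) * (g t + δ)) ∂κ :=
        h1.trans_eq h2
      _ ≤ ε/2 + (I + ε/2) := add_le_add hGM claim1
      _ = I + ε := by ring

lemma stmt2_stage2 (κ : Measure ℝ) [IsFiniteMeasure κ]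
    (f g : ℝ → ℝ) (hfm : Measurable f) (hgm : Measurable g)
    (hf0 : ∀ t, 0 ≤ f t) (hg0 : ∀ t, 0 ≤ g t)
    (hfint : Integrable f κ) (hgint : Integrable g κ) {ε : ℝ} (hε : 0 < ε) :
    ∃ M : ℝ, 1 ≤ M ∧ ∃ v : ℝ → ℝ, Continuous v ∧ (∀ t, M⁻¹ ≤ v t) ∧ (∀ t, v t ≤ M) ∧
      (∫ t, v t * f t ∂κ) ≤ (∫ t, Real.sqrt (f t * g t) ∂κ) + ε ∧
      (∫ t, (v t)⁻¹ * g t ∂κ) ≤ (∫ t, Real.sqrt (f t * g t) ∂κ) + ε := by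
  obtain ⟨M, hM1, w, hwm, hwlb, hwub, hwf, hwg⟩ :=
    stmt2_stage1 κ f g hfm hgm hf0 hg0 hfint hgint (half_pos hε)
  have hM0 : (0:ℝ) < M := lt_of_lt_of_le one_pos hM1
  have hMinv0 : (0:ℝ) < M⁻¹ := by positivity
  have hMinvM : M⁻¹ ≤ M := by
    have h1 : M⁻¹ ≤ 1 := inv_le_one_of_one_le₀ hM1
    linarith
  have hwp : ∀ t, 0 < w t := fun t => lt_of_lt_of_le hMinv0 (hwlb t)
  -- the weighted measure
  set ρ : ℝ → ℝ≥0 := fun t => (f t + g t).toNNReal with hρdef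
  have hρm : Measurable ρ := (hfm.add hgm).real_toNNReal
  set μ : Measure ℝ := κ.withDensity (fun t => (ρ t : ℝ≥0∞)) with hμdef
  have hμfin : IsFiniteMeasure μ := by
    rw [hμdef]
    have : (fun t => ((ρ t : ℝ≥0) : ℝ≥0∞)) = fun t => ENNReal.ofReal (f t + g t) := by
      funext t; rw [ENNReal.ofReal]
    rw [this]
    exact isFiniteMeasure_withDensity_ofReal (hfint.add hgint).2
  have hwμint : Integrable w μ := by
    apply Integrable.mono' (integrable_const M) hwm.aestronglyMeasurable
    filter_upwards with t
    rw [Real.norm_eq_abs, abs_of_nonneg (hwp t).le]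
    exact hwub t
  set η := ε/(4*M^2) with hηdef
  have hη0 : 0 < η := by positivity
  obtain ⟨v₀, -, hv₀close, hv₀cont, hv₀int⟩ :=
    hwμint.exists_hasCompactSupport_integral_sub_le hη0
  set v : ℝ → ℝ := fun t => min M (max M⁻¹ (v₀ t)) with hvdef
  have hvcont : Continuous v := continuous_const.min (continuous_const.max hv₀cont)
  have hvlb : ∀ t, M⁻¹ ≤ v t := fun t => le_min hMinvM (le_max_left _ _)
  have hvub : ∀ t, v t ≤ M := fun t => min_le_left _ _
  have hvp : ∀ t, 0 < v t := fun t => lt_of_lt_of_le hMinv0 (hvlb t)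
  have hvw : ∀ t, |v t - w t| ≤ |w t - v₀ t| := by
    intro t
    rw [abs_sub_comm (w t) (v₀ t)]
    exact stmt2_clamp_close hMinvM (hwlb t) (hwub t)
  -- the closeness integral
  have hvwm : Measurable (fun t => |v t - w t|) := (hvcont.measurable.sub hwm).abs
  have hvwb : ∀ t, |v t - w t| ≤ 2*M := by
    intro t
    rw [abs_sub_le_iff]
    constructor <;> nlinarith [hvlb t, hvub t, hwlb t, hwub t, hMinv0]
  have habs_int : Integrable (fun t => |v t - w t| * (f t + g t)) κ := by
    apply (hfint.add hgint).bdd_mul (c := 2*M) hvwm.aestronglyMeasurable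
    filter_upwards with t
    rw [Real.norm_eq_abs, abs_of_nonneg (abs_nonneg _)]
    exact hvwb t
  have key : (∫ t, |v t - w t| * (f t + g t) ∂κ) ≤ η := by
    have e : (∫ t, |v t - w t| * (f t + g t) ∂κ) = ∫ t, |v t - w t| ∂μ := by
      rw [hμdef, integral_withDensity_eq_integral_smul hρm (fun t => |v t - w t|)]
      congr 1; funext t
      rw [NNReal.smul_def, smul_eq_mul, hρdef]
      rw [Real.coe_toNNReal _ (by linarith [hf0 t, hg0 t])]
      ring
    rw [e]
    have hsubint : Integrable (fun x => w x - v₀ x) μ := hwμint.sub hv₀int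
    calc (∫ t, |v t - w t| ∂μ) ≤ ∫ t, ‖w t - v₀ t‖ ∂μ := by
          apply integral_mono_of_nonneg (Filter.Eventually.of_forall fun t => abs_nonneg _)
            hsubint.norm
          filter_upwards with t
          rw [Real.norm_eq_abs]
          exact hvw t
      _ ≤ η := hv₀close
  have hwfint : Integrable (fun t => w t * f t) κ := by
    apply hfint.bdd_mul (c := M) hwm.aestronglyMeasurable
    filter_upwards with t
    rw [Real.norm_eq_abs, abs_of_nonneg (hwp t).le]
    exact hwub t
  have hwginv_int : Integrable (fun t => (w t)⁻¹ * g t) κ := by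
    apply hgint.bdd_mul (c := M) (hwm.inv).aestronglyMeasurable
    filter_upwards with t
    rw [Real.norm_eq_abs, Pi.inv_apply, abs_of_nonneg (inv_nonneg.mpr (hwp t).le)]
    calc (w t)⁻¹ ≤ (M⁻¹)⁻¹ := inv_anti₀ hMinv0 (hwlb t)
      _ = M := inv_inv M
  refine ⟨M, hM1, v, hvcont, hvlb, hvub, ?_, ?_⟩
  · -- ∫ v f
    have hpt : ∀ t, v t * f t ≤ w t * f t + |v t - w t| * (f t + g t) := by
      intro t
      have h1 : v t * f t - w t * f t = (v t - w t) * f t := by ring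
      have h2 : (v t - w t) * f t ≤ |v t - w t| * f t :=
        mul_le_mul_of_nonneg_right (le_abs_self _) (hf0 t)
      have h3 : |v t - w t| * f t ≤ |v t - w t| * (f t + g t) :=
        mul_le_mul_of_nonneg_left (by linarith [hg0 t]) (abs_nonneg _)
      linarith
    have h1 : (∫ t, v t * f t ∂κ) ≤ ∫ t, (w t * f t + |v t - w t| * (f t + g t)) ∂κ := by
      apply integral_mono_of_nonneg
        (Filter.Eventually.of_forall fun t => mul_nonneg (hvp t).le (hf0 t))
        (hwfint.add habs_int)
      exact Filter.Eventually.of_forall hpt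
    have h2 : (∫ t, (w t * f t + |v t - w t| * (f t + g t)) ∂κ)
        = (∫ t, w t * f t ∂κ) + ∫ t, |v t - w t| * (f t + g t) ∂κ :=
      integral_add hwfint habs_int
    have hηε : η ≤ ε/2 := by
      rw [hηdef, div_le_div_iff₀ (by positivity) (by norm_num)]
      nlinarith [hM1, hε.le, sq_nonneg (M-1)]
    calc (∫ t, v t * f t ∂κ) ≤ (∫ t, w t * f t ∂κ) + ∫ t, |v t - w t| * (f t + g t) ∂κ :=
        h1.trans_eq h2
      _ ≤ ((∫ t, Real.sqrt (f t * g t) ∂κ) + ε/2) + η := add_le_add hwf key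
      _ ≤ (∫ t, Real.sqrt (f t * g t) ∂κ) + ε := by linarith
  · -- ∫ v⁻¹ g
    have hpt : ∀ t, (v t)⁻¹ * g t ≤ (w t)⁻¹ * g t + M^2 * (|v t - w t| * (f t + g t)) := by
      intro t
      have hvt := hvp t; have hwt := hwp t
      have hinv : |(v t)⁻¹ - (w t)⁻¹| ≤ M^2 * |v t - w t| := by
        have hv2 : (v t)⁻¹ ≤ M := by
          calc (v t)⁻¹ ≤ (M⁻¹)⁻¹ := inv_anti₀ hMinv0 (hvlb t)
            _ = M := inv_inv M
        have hw2 : (w t)⁻¹ ≤ M := by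
          calc (w t)⁻¹ ≤ (M⁻¹)⁻¹ := inv_anti₀ hMinv0 (hwlb t)
            _ = M := inv_inv M
        have e1 : (v t)⁻¹ - (w t)⁻¹ = (w t - v t) * ((v t)⁻¹ * (w t)⁻¹) := by
          field_simp
        rw [e1, abs_mul, abs_sub_comm]
        have h6 : |(v t)⁻¹ * (w t)⁻¹| ≤ M^2 := by
          rw [abs_of_nonneg (mul_nonneg (inv_nonneg.mpr hvt.le) (inv_nonneg.mpr hwt.le))]
          calc (v t)⁻¹ * (w t)⁻¹ ≤ M * M :=
              mul_le_mul hv2 hw2 (inv_nonneg.mpr hwt.le) hM0.le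
            _ = M^2 := (sq M).symm
        calc |v t - w t| * |(v t)⁻¹ * (w t)⁻¹| ≤ |v t - w t| * M^2 :=
            mul_le_mul_of_nonneg_left h6 (abs_nonneg _)
          _ = M^2 * |v t - w t| := by ring
      have h2 : (v t)⁻¹ * g t - (w t)⁻¹ * g t = ((v t)⁻¹ - (w t)⁻¹) * g t := by ring
      have h3 : ((v t)⁻¹ - (w t)⁻¹) * g t ≤ |(v t)⁻¹ - (w t)⁻¹| * g t :=
        mul_le_mul_of_nonneg_right (le_abs_self _) (hg0 t)
      have h4 : |(v t)⁻¹ - (w t)⁻¹| * g t ≤ (M^2 * |v t - w t|) * g t :=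
        mul_le_mul_of_nonneg_right hinv (hg0 t)
      have h5 : (M^2 * |v t - w t|) * g t ≤ M^2 * (|v t - w t| * (f t + g t)) := by
        have : |v t - w t| * g t ≤ |v t - w t| * (f t + g t) :=
          mul_le_mul_of_nonneg_left (by linarith [hf0 t]) (abs_nonneg _)
        nlinarith [sq_nonneg M]
      linarith
    have h1 : (∫ t, (v t)⁻¹ * g t ∂κ) ≤
        ∫ t, ((w t)⁻¹ * g t + M^2 * (|v t - w t| * (f t + g t))) ∂κ := by
      apply integral_mono_of_nonneg
        (Filter.Eventually.of_forall fun t => mul_nonneg (by positivity) (hg0 t))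
        (hwginv_int.add (habs_int.const_mul _))
      exact Filter.Eventually.of_forall hpt
    have h2 : (∫ t, ((w t)⁻¹ * g t + M^2 * (|v t - w t| * (f t + g t))) ∂κ)
        = (∫ t, (w t)⁻¹ * g t ∂κ) + M^2 * ∫ t, (|v t - w t| * (f t + g t)) ∂κ := by
      rw [integral_add hwginv_int (habs_int.const_mul _), integral_const_mul]
    have h3 : M^2 * (∫ t, (|v t - w t| * (f t + g t)) ∂κ) ≤ M^2 * η :=
      mul_le_mul_of_nonneg_left key (by positivity)
    have h4 : M^2 * η = ε/4 := by
      rw [hηdef]; field_simp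
    calc (∫ t, (v t)⁻¹ * g t ∂κ)
        ≤ (∫ t, (w t)⁻¹ * g t ∂κ) + M^2 * ∫ t, (|v t - w t| * (f t + g t)) ∂κ := h1.trans_eq h2
      _ ≤ ((∫ t, Real.sqrt (f t * g t) ∂κ) + ε/2) + ε/4 := by linarith [hwg]
      _ ≤ (∫ t, Real.sqrt (f t * g t) ∂κ) + ε := by linarith

lemma stmt2_stage3 (κ : Measure ℝ) [IsFiniteMeasure κ] (R : ℝ)
    (hκsupp : κ (Set.Icc (-R) R)ᶜ = 0)
    (f g : ℝ → ℝ) (hfm : Measurable f) (hgm : Measurable g)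
    (hf0 : ∀ t, 0 ≤ f t) (hg0 : ∀ t, 0 ≤ g t)
    (hfint : Integrable f κ) (hgint : Integrable g κ) {ε : ℝ} (hε : 0 < ε) :
    ∃ p q : Polynomial ℝ,
      (∫ t, (1 - p.eval t * q.eval t)^2 * f t ∂κ) ≤ ε ∧
      (∫ t, (p.eval t)^2 * f t ∂κ) ≤ (∫ t, Real.sqrt (f t * g t) ∂κ) + ε ∧
      (∫ t, (q.eval t)^2 * g t ∂κ) ≤ (∫ t, Real.sqrt (f t * g t) ∂κ) + ε := by
  obtain ⟨M, hM1, v, hvcont, hvlb, hvub, hvf, hvg⟩ :=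
    stmt2_stage2 κ f g hfm hgm hf0 hg0 hfint hgint (half_pos hε)
  have hM0 : (0:ℝ) < M := lt_of_lt_of_le one_pos hM1
  have hMinv0 : (0:ℝ) < M⁻¹ := by positivity
  have hvp : ∀ t, 0 < v t := fun t => lt_of_lt_of_le hMinv0 (hvlb t)
  set u₁ : ℝ → ℝ := fun t => Real.sqrt (v t) with hu₁def
  set u₂ : ℝ → ℝ := fun t => (Real.sqrt (v t))⁻¹ with hu₂def
  have hu₁p : ∀ t, 0 < u₁ t := fun t => Real.sqrt_pos.mpr (hvp t)
  have hu₁cont : Continuous u₁ := Real.continuous_sqrt.comp hvcont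
  have hu₂cont : Continuous u₂ := hu₁cont.inv₀ fun t => ne_of_gt (hu₁p t)
  have hu₂p : ∀ t, 0 < u₂ t := fun t => inv_pos.mpr (hu₁p t)
  have hsM0 : (0:ℝ) < Real.sqrt M := Real.sqrt_pos.mpr hM0
  have hu₁b : ∀ t, u₁ t ≤ Real.sqrt M := fun t => Real.sqrt_le_sqrt (hvub t)
  have hu₂b : ∀ t, u₂ t ≤ Real.sqrt M := by
    intro t
    have h1 : Real.sqrt M⁻¹ ≤ u₁ t := Real.sqrt_le_sqrt (hvlb t)
    have h2 : u₂ t ≤ (Real.sqrt M⁻¹)⁻¹ :=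
      inv_anti₀ (Real.sqrt_pos.mpr hMinv0) h1
    calc u₂ t ≤ (Real.sqrt M⁻¹)⁻¹ := h2
      _ = Real.sqrt M := by rw [Real.sqrt_inv, inv_inv]
  have hu₁u₂ : ∀ t, u₁ t * u₂ t = 1 := fun t => mul_inv_cancel₀ (ne_of_gt (hu₁p t))
  have hu₁sq : ∀ t, (u₁ t)^2 = v t := fun t => Real.sq_sqrt (hvp t).le
  have hu₂sq : ∀ t, (u₂ t)^2 = (v t)⁻¹ := by
    intro t
    show ((Real.sqrt (v t))⁻¹)^2 = (v t)⁻¹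
    rw [← Real.sqrt_inv, Real.sq_sqrt (inv_nonneg.mpr (hvp t).le)]
  obtain ⟨F, hFdef⟩ : ∃ F:ℝ, F = ∫ t, f t ∂κ := ⟨_, rfl⟩
  obtain ⟨G, hGdef⟩ : ∃ G:ℝ, G = ∫ t, g t ∂κ := ⟨_, rfl⟩
  have hF0 : 0 ≤ F := hFdef ▸ integral_nonneg hf0
  have hG0 : 0 ≤ G := hGdef ▸ integral_nonneg hg0
  obtain ⟨K₂, hK₂def⟩ : ∃ K:ℝ, K = 2*Real.sqrt M + 1 := ⟨_, rfl⟩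
  have hK₂1 : 1 ≤ K₂ := by rw [hK₂def]; nlinarith
  have hK₂0 : 0 < K₂ := lt_of_lt_of_le one_pos hK₂1
  obtain ⟨η, hηdef⟩ : ∃ η:ℝ, η = min 1 (ε/(2*K₂^2*(F+G+1))) := ⟨_, rfl⟩
  have hη0 : 0 < η := hηdef ▸ lt_min one_pos (by positivity)
  have hη1 : η ≤ 1 := hηdef ▸ min_le_left _ _
  have hηe : η * (K₂^2 * (F+G+1)) ≤ ε/2 := by
    have h1 : η ≤ ε/(2*K₂^2*(F+G+1)) := hηdef ▸ min_le_right _ _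
    have h2 : η * (K₂^2 * (F+G+1)) ≤ (ε/(2*K₂^2*(F+G+1))) * (K₂^2 * (F+G+1)) :=
      mul_le_mul_of_nonneg_right h1 (by positivity)
    have h3 : (ε/(2*K₂^2*(F+G+1))) * (K₂^2 * (F+G+1)) = ε/2 := by
      field_simp
    linarith
  obtain ⟨p, hp⟩ := exists_polynomial_near_of_continuousOn (-R) R u₁
    hu₁cont.continuousOn η hη0
  obtain ⟨q, hq⟩ := exists_polynomial_near_of_continuousOn (-R) R u₂
    hu₂cont.continuousOn η hη0
  have hae : ∀ᵐ t ∂κ, t ∈ Set.Icc (-R) R := by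
    rw [MeasureTheory.ae_iff]
    simpa [Set.compl_def] using hκsupp
  -- pointwise a.e. estimates
  have hptwise : ∀ᵐ t ∂κ,
      (1 - p.eval t * q.eval t)^2 ≤ (η*K₂)^2 ∧
      (p.eval t)^2 ≤ v t + η*K₂ ∧ (q.eval t)^2 ≤ (v t)⁻¹ + η*K₂ := by
    filter_upwards [hae] with t ht
    have hpt : |p.eval t - u₁ t| ≤ η := (hp t ht).le
    have hqt : |q.eval t - u₂ t| ≤ η := (hq t ht).le
    have hpb : |p.eval t| ≤ Real.sqrt M + η := by
      calc |p.eval t| = |(p.eval t - u₁ t) + u₁ t| := by ring_nf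
        _ ≤ |p.eval t - u₁ t| + |u₁ t| := abs_add_le _ _
        _ ≤ η + (Real.sqrt M) := by
            rw [abs_of_nonneg (hu₁p t).le]; exact add_le_add hpt (hu₁b t)
        _ = Real.sqrt M + η := by ring
    have hqb : |q.eval t| ≤ Real.sqrt M + η := by
      calc |q.eval t| = |(q.eval t - u₂ t) + u₂ t| := by ring_nf
        _ ≤ |q.eval t - u₂ t| + |u₂ t| := abs_add_le _ _
        _ ≤ η + (Real.sqrt M) := by
            rw [abs_of_nonneg (hu₂p t).le]; exact add_le_add hqt (hu₂b t)
        _ = Real.sqrt M + η := by ring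
    have hpq1 : |1 - p.eval t * q.eval t| ≤ η*K₂ := by
      have e1 : p.eval t * q.eval t - 1 =
          (p.eval t - u₁ t) * q.eval t + u₁ t * (q.eval t - u₂ t) := by
        rw [← hu₁u₂ t]; ring
      calc |1 - p.eval t * q.eval t| = |p.eval t * q.eval t - 1| := abs_sub_comm _ _
        _ = |(p.eval t - u₁ t) * q.eval t + u₁ t * (q.eval t - u₂ t)| := by rw [e1]
        _ ≤ |(p.eval t - u₁ t) * q.eval t| + |u₁ t * (q.eval t - u₂ t)| := abs_add_le _ _
        _ = |p.eval t - u₁ t| * |q.eval t| + |u₁ t| * |q.eval t - u₂ t| := by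
            rw [abs_mul, abs_mul]
        _ ≤ η * (Real.sqrt M + η) + Real.sqrt M * η := by
            apply add_le_add
            · exact mul_le_mul hpt hqb (abs_nonneg _) hη0.le
            · rw [abs_of_nonneg (hu₁p t).le]
              exact mul_le_mul (hu₁b t) hqt (abs_nonneg _) hsM0.le
        _ ≤ η * K₂ := by rw [hK₂def]; nlinarith [hsM0.le, hη0.le, hη1]
    refine ⟨?_, ?_, ?_⟩
    · calc (1 - p.eval t * q.eval t)^2 = |1 - p.eval t * q.eval t|^2 := (sq_abs _).symm
        _ ≤ (η*K₂)^2 := by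
            apply pow_le_pow_left₀ (abs_nonneg _) hpq1
    · calc (p.eval t)^2 = |p.eval t|^2 := (sq_abs _).symm
        _ ≤ (u₁ t + η)^2 := by
            apply pow_le_pow_left₀ (abs_nonneg _)
            calc |p.eval t| = |(p.eval t - u₁ t) + u₁ t| := by ring_nf
              _ ≤ |p.eval t - u₁ t| + |u₁ t| := abs_add_le _ _
              _ ≤ η + u₁ t := by
                  rw [abs_of_nonneg (hu₁p t).le]; exact add_le_add_left hpt _
              _ = u₁ t + η := by ring
        _ = (u₁ t)^2 + (2*u₁ t + η)*η := by ring
        _ ≤ v t + η*K₂ := by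
            rw [hu₁sq t, hK₂def]
            have := hu₁b t
            nlinarith [hη0.le, hη1]
    · calc (q.eval t)^2 = |q.eval t|^2 := (sq_abs _).symm
        _ ≤ (u₂ t + η)^2 := by
            apply pow_le_pow_left₀ (abs_nonneg _)
            calc |q.eval t| = |(q.eval t - u₂ t) + u₂ t| := by ring_nf
              _ ≤ |q.eval t - u₂ t| + |u₂ t| := abs_add_le _ _
              _ ≤ η + u₂ t := by
                  rw [abs_of_nonneg (hu₂p t).le]; exact add_le_add_left hqt _
              _ = u₂ t + η := by ring
        _ = (u₂ t)^2 + (2*u₂ t + η)*η := by ring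
        _ ≤ (v t)⁻¹ + η*K₂ := by
            rw [hu₂sq t, hK₂def]
            have := hu₂b t
            nlinarith [hη0.le, hη1]
  -- integrability facts
  have hvfint : Integrable (fun t => v t * f t) κ := by
    apply hfint.bdd_mul (c := M) hvcont.measurable.aestronglyMeasurable
    filter_upwards with t
    rw [Real.norm_eq_abs, abs_of_nonneg (hvp t).le]
    exact hvub t
  have hvginv_int : Integrable (fun t => (v t)⁻¹ * g t) κ := by
    apply hgint.bdd_mul (c := M) (hvcont.measurable.inv).aestronglyMeasurable
    filter_upwards with t
    rw [Real.norm_eq_abs, Pi.inv_apply, abs_of_nonneg (inv_nonneg.mpr (hvp t).le)]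
    calc (v t)⁻¹ ≤ (M⁻¹)⁻¹ := inv_anti₀ hMinv0 (hvlb t)
      _ = M := inv_inv M
  refine ⟨p, q, ?_, ?_, ?_⟩
  · -- first bound
    have h1 : (∫ t, (1 - p.eval t * q.eval t)^2 * f t ∂κ) ≤ ∫ t, (η*K₂)^2 * f t ∂κ := by
      apply integral_mono_of_nonneg
        (Filter.Eventually.of_forall fun t => mul_nonneg (sq_nonneg _) (hf0 t))
        (hfint.const_mul _)
      filter_upwards [hptwise] with t ht
      exact mul_le_mul_of_nonneg_right ht.1 (hf0 t)
    have h2 : (∫ t, (η*K₂)^2 * f t ∂κ) = (η*K₂)^2 * F := by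
      rw [integral_const_mul, hFdef]
    have h3 : (η*K₂)^2 * F ≤ ε := by
      have e1 : (η*K₂)^2 * F = (η * K₂^2) * (η * F) := by ring
      have e2 : η * F ≤ F + G + 1 := by nlinarith
      have e3 : (η*K₂)^2 * F ≤ η * (K₂^2 * (F+G+1)) := by
        have h4 : (0:ℝ) ≤ η * K₂^2 := by positivity
        calc (η*K₂)^2 * F = (η * K₂^2) * (η * F) := by ring
          _ ≤ (η * K₂^2) * (F+G+1) := mul_le_mul_of_nonneg_left e2 h4
          _ = η * (K₂^2 * (F+G+1)) := by ring
      linarith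
    linarith [h1.trans_eq h2]
  · -- second bound
    have h1 : (∫ t, (p.eval t)^2 * f t ∂κ) ≤ ∫ t, (v t * f t + (η*K₂) * f t) ∂κ := by
      apply integral_mono_of_nonneg
        (Filter.Eventually.of_forall fun t => mul_nonneg (sq_nonneg _) (hf0 t))
        (hvfint.add (hfint.const_mul _))
      filter_upwards [hptwise] with t ht
      calc (p.eval t)^2 * f t ≤ (v t + η*K₂) * f t :=
          mul_le_mul_of_nonneg_right ht.2.1 (hf0 t)
        _ = v t * f t + (η*K₂) * f t := by ring
    have h2 : (∫ t, (v t * f t + (η*K₂) * f t) ∂κ)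
        = (∫ t, v t * f t ∂κ) + (η*K₂) * F := by
      rw [integral_add hvfint (hfint.const_mul _), integral_const_mul, hFdef]
    have h3 : (η*K₂) * F ≤ ε/2 := by
      have b0 : K₂ ≤ K₂^2 := by nlinarith
      have b1 : K₂ * F ≤ K₂^2 * F := mul_le_mul_of_nonneg_right b0 hF0
      have b2 : K₂^2 * F ≤ K₂^2 * (F+G+1) :=
        mul_le_mul_of_nonneg_left (by linarith) (by positivity)
      have e2 : (η*K₂) * F ≤ η * (K₂^2 * (F+G+1)) := by
        calc (η*K₂)*F = η*(K₂*F) := by ring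
          _ ≤ η*(K₂^2*(F+G+1)) := mul_le_mul_of_nonneg_left (by linarith) hη0.le
      linarith
    calc (∫ t, (p.eval t)^2 * f t ∂κ) ≤ (∫ t, v t * f t ∂κ) + (η*K₂) * F := h1.trans_eq h2
      _ ≤ ((∫ t, Real.sqrt (f t * g t) ∂κ) + ε/2) + ε/2 := add_le_add hvf h3
      _ = (∫ t, Real.sqrt (f t * g t) ∂κ) + ε := by ring
  · -- third bound
    have h1 : (∫ t, (q.eval t)^2 * g t ∂κ) ≤ ∫ t, ((v t)⁻¹ * g t + (η*K₂) * g t) ∂κ := by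
      apply integral_mono_of_nonneg
        (Filter.Eventually.of_forall fun t => mul_nonneg (sq_nonneg _) (hg0 t))
        (hvginv_int.add (hgint.const_mul _))
      filter_upwards [hptwise] with t ht
      calc (q.eval t)^2 * g t ≤ ((v t)⁻¹ + η*K₂) * g t :=
          mul_le_mul_of_nonneg_right ht.2.2 (hg0 t)
        _ = (v t)⁻¹ * g t + (η*K₂) * g t := by ring
    have h2 : (∫ t, ((v t)⁻¹ * g t + (η*K₂) * g t) ∂κ)
        = (∫ t, (v t)⁻¹ * g t ∂κ) + (η*K₂) * G := by
      rw [integral_add hvginv_int (hgint.const_mul _), integral_const_mul, hGdef]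
    have h3 : (η*K₂) * G ≤ ε/2 := by
      have b0 : K₂ ≤ K₂^2 := by nlinarith
      have b1 : K₂ * G ≤ K₂^2 * G := mul_le_mul_of_nonneg_right b0 hG0
      have b2 : K₂^2 * G ≤ K₂^2 * (F+G+1) :=
        mul_le_mul_of_nonneg_left (by linarith) (by positivity)
      have e2 : (η*K₂) * G ≤ η * (K₂^2 * (F+G+1)) := by
        calc (η*K₂)*G = η*(K₂*G) := by ring
          _ ≤ η*(K₂^2*(F+G+1)) := mul_le_mul_of_nonneg_left (by linarith) hη0.le
      linarith
    calc (∫ t, (q.eval t)^2 * g t ∂κ) ≤ (∫ t, (v t)⁻¹ * g t ∂κ) + (η*K₂) * G := h1.trans_eq h2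
      _ ≤ ((∫ t, Real.sqrt (f t * g t) ∂κ) + ε/2) + ε/2 := add_le_add hvg h3
      _ = (∫ t, Real.sqrt (f t * g t) ∂κ) + ε := by ring

lemma stmt2_ae_Icc (κ : Measure ℝ) (R : ℝ) (hκsupp : κ (Set.Icc (-R) R)ᶜ = 0) :
    ∀ᵐ t ∂κ, t ∈ Set.Icc (-R) R := by
  rw [MeasureTheory.ae_iff]
  simpa [Set.compl_def] using hκsupp

lemma stmt2_integrable_eval (κ : Measure ℝ) [IsFiniteMeasure κ] (R : ℝ)
    (hκsupp : κ (Set.Icc (-R) R)ᶜ = 0) (f : ℝ → ℝ) (hfint : Integrable f κ) (r : ℝ[X]) :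
    Integrable (fun t => r.eval t * f t) κ := by
  obtain ⟨Cb, hCb⟩ := (isCompact_Icc (a := -R) (b := R)).exists_bound_of_continuousOn
    r.continuous.continuousOn
  apply hfint.bdd_mul (c := Cb) r.continuous.measurable.aestronglyMeasurable
  filter_upwards [stmt2_ae_Icc κ R hκsupp] with t ht
  exact hCb t ht

section Hilbert

variable {H : Type*} [NormedAddCommGroup H] [InnerProductSpace ℝ H] [CompleteSpace H]

lemma stmt2_aeval_sa (T : H →L[ℝ] H) (hT : IsSelfAdjoint T) (r : ℝ[X]) :
    IsSelfAdjoint (Polynomial.aeval T r) := by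
  induction r using Polynomial.induction_on' with
  | add p q hp hq => rw [map_add]; exact hp.add hq
  | monomial n a =>
      rw [Polynomial.aeval_monomial, Algebra.algebraMap_eq_smul_one, smul_mul_assoc, one_mul]
      exact (IsSelfAdjoint.all a).smul (hT.pow n)

lemma stmt2_inner_aeval (T : H →L[ℝ] H) (z : H) (κ : Measure ℝ) [IsFiniteMeasure κ] (R : ℝ)
    (hκsupp : κ (Set.Icc (-R) R)ᶜ = 0) (f : ℝ → ℝ) (hfint : Integrable f κ)
    (hz : ∀ k : ℕ, ⟪(T ^ k) z, z⟫ = ∫ t, t ^ k * f t ∂κ) (r : ℝ[X]) :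
    ⟪(Polynomial.aeval T r) z, z⟫ = ∫ t, r.eval t * f t ∂κ := by
  induction r using Polynomial.induction_on' with
  | add p q hp hq =>
      have e : (fun t => (p+q).eval t * f t) = fun t => p.eval t * f t + q.eval t * f t := by
        funext t; rw [Polynomial.eval_add]; ring
      rw [map_add, ContinuousLinearMap.add_apply, inner_add_left, hp, hq, e,
        integral_add (stmt2_integrable_eval κ R hκsupp f hfint p)
          (stmt2_integrable_eval κ R hκsupp f hfint q)]
  | monomial n a =>
      have h1 : (Polynomial.aeval T ((Polynomial.monomial n) a)) z = a • ((T^n) z) := by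
        rw [Polynomial.aeval_monomial, Algebra.algebraMap_eq_smul_one, smul_mul_assoc, one_mul,
          ContinuousLinearMap.smul_apply]
      rw [h1, real_inner_smul_left, hz n, ← integral_const_mul]
      congr 1; funext t; rw [Polynomial.eval_monomial]; ring

lemma stmt2_normsq (T : H →L[ℝ] H) (hT : IsSelfAdjoint T) (z : H) (κ : Measure ℝ)
    [IsFiniteMeasure κ] (R : ℝ)
    (hκsupp : κ (Set.Icc (-R) R)ᶜ = 0) (f : ℝ → ℝ) (hfint : Integrable f κ)
    (hz : ∀ k : ℕ, ⟪(T ^ k) z, z⟫ = ∫ t, t ^ k * f t ∂κ) (r : ℝ[X]) :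
    ⟪(Polynomial.aeval T r) z, (Polynomial.aeval T r) z⟫ = ∫ t, (r.eval t)^2 * f t ∂κ := by
  have hsa := stmt2_aeval_sa T hT r
  have h1 : (Polynomial.aeval T (r*r)) z = (Polynomial.aeval T r) ((Polynomial.aeval T r) z) := by
    rw [map_mul]; rfl
  have h2 := stmt2_inner_aeval T z κ R hκsupp f hfint hz (r*r)
  rw [h1] at h2
  have h3 : ⟪(Polynomial.aeval T r) ((Polynomial.aeval T r) z), z⟫
      = ⟪(Polynomial.aeval T r) z, (Polynomial.aeval T r) z⟫ :=
    hsa.isSymmetric ((Polynomial.aeval T r) z) z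
  rw [← h3, h2]
  congr 1; funext t; rw [Polynomial.eval_mul]; ring

end Hilbert
/-- Lemma 3.2 (Hilbert-space form): if the spectral measures of the bounded self-adjoint
operator `T` at `x` and at `y` have densities `f`, `g` with respect to a common finite
compactly supported measure `κ`, then `|⟪x, y⟫| ≤ ∫ √(f g) dκ`. -/
theorem stmt2 {H : Type*} [NormedAddCommGroup H] [InnerProductSpace ℝ H] [CompleteSpace H]
    (T : H →L[ℝ] H) (hT : IsSelfAdjoint T) (x y : H)
    (κ : Measure ℝ) [IsFiniteMeasure κ]
    (R : ℝ) (hκsupp : κ (Set.Icc (-R) R)ᶜ = 0)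
    (f g : ℝ → ℝ) (hf0 : ∀ t, 0 ≤ f t) (hg0 : ∀ t, 0 ≤ g t)
    (hfint : Integrable f κ) (hgint : Integrable g κ)
    (hx : ∀ k : ℕ, ⟪(T ^ k) x, x⟫ = ∫ t, t ^ k * f t ∂κ)
    (hy : ∀ k : ℕ, ⟪(T ^ k) y, y⟫ = ∫ t, t ^ k * g t ∂κ) :
    |⟪x, y⟫| ≤ ∫ t, Real.sqrt (f t * g t) ∂κ := by
  -- measurable representatives
  obtain ⟨f', hf'm, hf'0, hff'⟩ : ∃ f' : ℝ → ℝ, Measurable f' ∧ (∀ t, 0 ≤ f' t) ∧ f =ᵐ[κ] f' := by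
    have hsm := hfint.1
    refine ⟨fun t => max (hsm.mk f t) 0,
      hsm.stronglyMeasurable_mk.measurable.max measurable_const,
      fun t => le_max_right _ _, ?_⟩
    filter_upwards [hsm.ae_eq_mk] with t ht
    rw [← ht, max_eq_left (hf0 t)]
  obtain ⟨g', hg'm, hg'0, hgg'⟩ : ∃ g' : ℝ → ℝ, Measurable g' ∧ (∀ t, 0 ≤ g' t) ∧ g =ᵐ[κ] g' := by
    have hsm := hgint.1
    refine ⟨fun t => max (hsm.mk g t) 0,
      hsm.stronglyMeasurable_mk.measurable.max measurable_const,
      fun t => le_max_right _ _, ?_⟩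
    filter_upwards [hsm.ae_eq_mk] with t ht
    rw [← ht, max_eq_left (hg0 t)]
  have hfint' : Integrable f' κ := hfint.congr hff'
  have hgint' : Integrable g' κ := hgint.congr hgg'
  have hx' : ∀ k : ℕ, ⟪(T ^ k) x, x⟫ = ∫ t, t ^ k * f' t ∂κ := by
    intro k; rw [hx k]
    apply integral_congr_ae
    filter_upwards [hff'] with t ht; rw [ht]
  have hy' : ∀ k : ℕ, ⟪(T ^ k) y, y⟫ = ∫ t, t ^ k * g' t ∂κ := by
    intro k; rw [hy k]
    apply integral_congr_ae
    filter_upwards [hgg'] with t ht; rw [ht]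
  have hgoal : (∫ t, Real.sqrt (f t * g t) ∂κ) = ∫ t, Real.sqrt (f' t * g' t) ∂κ := by
    apply integral_congr_ae
    filter_upwards [hff', hgg'] with t h1 h2; rw [h1, h2]
  rw [hgoal]
  refine le_of_forall_pos_le_add fun ε' hε' => ?_
  obtain ⟨I, hIdef⟩ : ∃ I:ℝ, I = ∫ t, Real.sqrt (f' t * g' t) ∂κ := ⟨_, rfl⟩
  rw [← hIdef]
  have hI0 : 0 ≤ I := hIdef ▸ integral_nonneg fun t => Real.sqrt_nonneg _
  obtain ⟨G, hGdef⟩ : ∃ G:ℝ, G = ∫ t, g' t ∂κ := ⟨_, rfl⟩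
  have hG0 : 0 ≤ G := hGdef ▸ integral_nonneg hg'0
  have hsG0 : 0 ≤ Real.sqrt G := Real.sqrt_nonneg G
  obtain ⟨ε, hεdef⟩ : ∃ ε:ℝ, ε = min (ε'/2) ((ε'/(2*(Real.sqrt G + 1)))^2) := ⟨_, rfl⟩
  have hε0 : 0 < ε := hεdef ▸ lt_min (half_pos hε') (by positivity)
  obtain ⟨p, q, h1, h2, h3⟩ :=
    stmt2_stage3 κ R hκsupp f' g' hf'm hg'm hf'0 hg'0 hfint' hgint' hε0
  rw [← hIdef] at h2 h3
  -- operator-side decomposition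
  have hsplit : ⟪x, y⟫ = ⟪(Polynomial.aeval T (1 - p*q)) x, y⟫
      + ⟪(Polynomial.aeval T (p*q)) x, y⟫ := by
    have e : (Polynomial.aeval T (1 - p*q)) x + (Polynomial.aeval T (p*q)) x = x := by
      rw [← ContinuousLinearMap.add_apply, ← map_add, sub_add_cancel, map_one,
        ContinuousLinearMap.one_apply]
    rw [← inner_add_left, e]
  have hswap : ⟪(Polynomial.aeval T (p*q)) x, y⟫
      = ⟪(Polynomial.aeval T p) x, (Polynomial.aeval T q) y⟫ := by
    have e : (Polynomial.aeval T (p*q)) x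
        = (Polynomial.aeval T q) ((Polynomial.aeval T p) x) := by
      rw [show p*q = q*p from mul_comm p q, map_mul]; rfl
    rw [e]
    exact (stmt2_aeval_sa T hT q).isSymmetric ((Polynomial.aeval T p) x) y
  have normeq : ∀ u : H, ‖u‖ = Real.sqrt ⟪u, u⟫ := fun u => by
    rw [real_inner_self_eq_norm_sq, Real.sqrt_sq (norm_nonneg _)]
  -- norms of the pieces
  have nA : ‖(Polynomial.aeval T (1 - p*q)) x‖
      = Real.sqrt (∫ t, (1 - p.eval t * q.eval t)^2 * f' t ∂κ) := by
    rw [normeq]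
    congr 1
    have h4 := stmt2_normsq T hT x κ R hκsupp f' hfint' hx' (1 - p*q)
    rw [h4]
    apply integral_congr_ae
    filter_upwards with t
    rw [Polynomial.eval_sub, Polynomial.eval_one, Polynomial.eval_mul]
  have nP : ‖(Polynomial.aeval T p) x‖ = Real.sqrt (∫ t, (p.eval t)^2 * f' t ∂κ) := by
    rw [normeq, stmt2_normsq T hT x κ R hκsupp f' hfint' hx' p]
  have nQ : ‖(Polynomial.aeval T q) y‖ = Real.sqrt (∫ t, (q.eval t)^2 * g' t ∂κ) := by
    rw [normeq, stmt2_normsq T hT y κ R hκsupp g' hgint' hy' q]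
  have ny : ‖y‖ = Real.sqrt G := by
    rw [normeq]
    congr 1
    have h5 := hy' 0
    rw [pow_zero, ContinuousLinearMap.one_apply] at h5
    rw [h5, hGdef]
    apply integral_congr_ae
    filter_upwards with t
    rw [pow_zero, one_mul]
  have e10 : 0 ≤ ∫ t, (p.eval t)^2 * f' t ∂κ :=
    integral_nonneg fun t => mul_nonneg (sq_nonneg _) (hf'0 t)
  have e20 : 0 ≤ ∫ t, (q.eval t)^2 * g' t ∂κ :=
    integral_nonneg fun t => mul_nonneg (sq_nonneg _) (hg'0 t)
  have hIε0 : 0 ≤ I + ε := by linarith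
  calc |⟪x, y⟫| = |⟪(Polynomial.aeval T (1 - p*q)) x, y⟫
        + ⟪(Polynomial.aeval T p) x, (Polynomial.aeval T q) y⟫| := by rw [hsplit, hswap]
    _ ≤ |⟪(Polynomial.aeval T (1 - p*q)) x, y⟫|
        + |⟪(Polynomial.aeval T p) x, (Polynomial.aeval T q) y⟫| := abs_add_le _ _
    _ ≤ ‖(Polynomial.aeval T (1 - p*q)) x‖ * ‖y‖
        + ‖(Polynomial.aeval T p) x‖ * ‖(Polynomial.aeval T q) y‖ :=
      add_le_add (abs_real_inner_le_norm _ _) (abs_real_inner_le_norm _ _)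
    _ = Real.sqrt (∫ t, (1 - p.eval t * q.eval t)^2 * f' t ∂κ) * Real.sqrt G
        + Real.sqrt (∫ t, (p.eval t)^2 * f' t ∂κ)
          * Real.sqrt (∫ t, (q.eval t)^2 * g' t ∂κ) := by rw [nA, nP, nQ, ny]
    _ ≤ Real.sqrt ε * Real.sqrt G + (I + ε) := by
        apply add_le_add
        · exact mul_le_mul_of_nonneg_right (Real.sqrt_le_sqrt h1) hsG0
        · calc Real.sqrt (∫ t, (p.eval t)^2 * f' t ∂κ)
                * Real.sqrt (∫ t, (q.eval t)^2 * g' t ∂κ)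
              = Real.sqrt ((∫ t, (p.eval t)^2 * f' t ∂κ)
                * (∫ t, (q.eval t)^2 * g' t ∂κ)) := (Real.sqrt_mul e10 _).symm
            _ ≤ Real.sqrt ((I+ε)*(I+ε)) :=
                Real.sqrt_le_sqrt (mul_le_mul h2 h3 e20 hIε0)
            _ = I + ε := Real.sqrt_mul_self hIε0
    _ ≤ I + ε' := by
        have hsε : Real.sqrt ε ≤ ε'/(2*(Real.sqrt G + 1)) := by
          calc Real.sqrt ε ≤ Real.sqrt ((ε'/(2*(Real.sqrt G + 1)))^2) :=
              hεdef ▸ Real.sqrt_le_sqrt (min_le_right _ _)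
            _ = ε'/(2*(Real.sqrt G + 1)) := Real.sqrt_sq (by positivity)
        have t1 : Real.sqrt ε * Real.sqrt G ≤ ε'/2 := by
          calc Real.sqrt ε * Real.sqrt G ≤ (ε'/(2*(Real.sqrt G + 1))) * Real.sqrt G :=
              mul_le_mul_of_nonneg_right hsε hsG0
            _ ≤ ε'/2 := by
                rw [div_mul_eq_mul_div, div_le_div_iff₀ (by positivity) two_pos]
                nlinarith [hε'.le, hsG0]
        have t2 : ε ≤ ε'/2 := hεdef ▸ min_le_left _ _
        linarith
end

section
/- Let H be a real Hilbert space, T : H → H a bounded self-adjoint operator, v ∈ H, and let ν be a spectral measure of T at v. Then for every w ∈ H there exists a function ĥ ∈ L²(ν) such that ⟪T^k v, w⟫ = ∫ t^k ĥ(t) dν(t) for every integer k ≥ 0. -/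
open MeasureTheory RealInnerProductSpace Polynomial

section Aux

variable {H : Type*} [NormedAddCommGroup H] [InnerProductSpace ℝ H] [CompleteSpace H]

/-- The linear map sending a polynomial to its evaluation function in `L²(ν)`. -/
private noncomputable def stmt6M (ν : Measure ℝ) [IsFiniteMeasure ν]
    (hmem : ∀ p : ℝ[X], MemLp (fun t => p.eval t) 2 ν) :
    ℝ[X] →ₗ[ℝ] Lp ℝ 2 ν where
  toFun p := (hmem p).toLp _
  map_add' p q :=
    (MemLp.toLp_congr (hmem (p + q)) ((hmem p).add (hmem q))
      (Filter.Eventually.of_forall fun t => by simp)).trans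
      (MemLp.toLp_add (hmem p) (hmem q))
  map_smul' c p :=
    (MemLp.toLp_congr (hmem (c • p)) ((hmem p).const_smul c)
      (Filter.Eventually.of_forall fun t => by simp)).trans
      (MemLp.toLp_const_smul c (hmem p))

private lemma stmt6M_coe (ν : Measure ℝ) [IsFiniteMeasure ν]
    (hmem : ∀ p : ℝ[X], MemLp (fun t => p.eval t) 2 ν) (p : ℝ[X]) :
    (stmt6M ν hmem p : ℝ → ℝ) =ᵐ[ν] fun t => p.eval t :=
  (hmem p).coeFn_toLp

/-- The linear functional `p ↦ ⟪p(T) v, w⟫`. -/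
private noncomputable def stmt6f (T : H →L[ℝ] H) (v w : H) : ℝ[X] →ₗ[ℝ] ℝ where
  toFun p := ⟪(aeval T p) v, w⟫
  map_add' p q := by
    simp [map_add, ContinuousLinearMap.add_apply, inner_add_left]
  map_smul' c p := by
    simp [_root_.map_smul, ContinuousLinearMap.smul_apply, real_inner_smul_left]

end Aux

/-- Lemma 4.2 (Hilbert-space form): if `ν` is a spectral measure of the bounded self-adjoint
operator `T` at `v`, then for every `w ∈ H` there is `hhat ∈ L²(ν)` with
`⟪T^k v, w⟫ = ∫ t^k hhat dν` for every `k ≥ 0`. -/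
theorem stmt6 {H : Type*} [NormedAddCommGroup H] [InnerProductSpace ℝ H] [CompleteSpace H]
    (T : H →L[ℝ] H) (hT : IsSelfAdjoint T) (v : H)
    (ν : Measure ℝ) [IsFiniteMeasure ν]
    (R : ℝ) (hνsupp : ν (Set.Icc (-R) R)ᶜ = 0)
    (hv : ∀ k : ℕ, ⟪(T ^ k) v, v⟫ = ∫ t, t ^ k ∂ν)
    (w : H) :
    ∃ hhat : ℝ → ℝ, MemLp hhat 2 ν ∧
      ∀ k : ℕ, ⟪(T ^ k) v, w⟫ = ∫ t, t ^ k * hhat t ∂ν := by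
  classical
  -- almost every point lies in the compact interval
  have hae : ∀ᵐ t ∂ν, t ∈ Set.Icc (-R) R := by
    rw [MeasureTheory.ae_iff]
    simpa [Set.compl_def] using hνsupp
  -- polynomials are in L²(ν)
  have hmem : ∀ p : ℝ[X], MemLp (fun t => p.eval t) 2 ν := by
    intro p
    obtain ⟨C, hC⟩ := (isCompact_Icc (a := -R) (b := R)).exists_bound_of_continuousOn
      (p.continuous.continuousOn)
    exact MemLp.of_bound p.continuous.aestronglyMeasurable C
      (hae.mono fun t ht => hC t ht)
  have hint : ∀ p : ℝ[X], Integrable (fun t => p.eval t) ν :=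
    fun p => (hmem p).integrable (by norm_num)
  have hmono : ∀ k : ℕ, Integrable (fun t => t ^ k) ν := by
    intro k
    have := hint (X ^ k)
    simp only [Polynomial.eval_pow, Polynomial.eval_X] at this
    exact this
  -- moments of polynomials
  have momA : ∀ p : ℝ[X], ⟪(aeval T p) v, v⟫ = ∫ t, p.eval t ∂ν := by
    intro p
    calc ⟪(aeval T p) v, v⟫
        = ∑ i ∈ Finset.range (p.natDegree + 1), p.coeff i * ⟪(T ^ i) v, v⟫ := by
          rw [Polynomial.aeval_eq_sum_range]
          simp [ContinuousLinearMap.sum_apply, sum_inner, real_inner_smul_left]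
      _ = ∑ i ∈ Finset.range (p.natDegree + 1), ∫ t, p.coeff i * t ^ i ∂ν := by
          refine Finset.sum_congr rfl fun i _ => ?_
          rw [hv i, integral_const_mul]
      _ = ∫ t, ∑ i ∈ Finset.range (p.natDegree + 1), p.coeff i * t ^ i ∂ν :=
          (integral_finset_sum _ fun i _ => (hmono i).const_mul _).symm
      _ = ∫ t, p.eval t ∂ν := by
          refine integral_congr_ae (Filter.Eventually.of_forall fun t => ?_)
          show ∑ i ∈ Finset.range (p.natDegree + 1), p.coeff i * t ^ i = p.eval t
          rw [Polynomial.eval_eq_sum_range]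
  -- symmetry of polynomials in T
  have hsymm : ∀ (q : ℝ[X]) (x y : H), ⟪(aeval T q) x, y⟫ = ⟪x, (aeval T q) y⟫ := by
    intro q x y
    rw [Polynomial.aeval_eq_sum_range]
    simp only [ContinuousLinearMap.sum_apply, ContinuousLinearMap.smul_apply, sum_inner,
      inner_sum, real_inner_smul_left, real_inner_smul_right]
    refine Finset.sum_congr rfl fun i _ => ?_
    have := (hT.pow i).isSymmetric x y
    simp only [ContinuousLinearMap.coe_coe] at this
    rw [this]
  -- inner products of images of polynomials
  have innB : ∀ p q : ℝ[X], ⟪(aeval T p) v, (aeval T q) v⟫ = ∫ t, p.eval t * q.eval t ∂ν := by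
    intro p q
    have h1 : ⟪(aeval T p) v, (aeval T q) v⟫ = ⟪(aeval T q) ((aeval T p) v), v⟫ :=
      (hsymm q _ v).symm
    have h2 : (aeval T q) ((aeval T p) v) = (aeval T (q * p)) v := by
      rw [map_mul]; rfl
    rw [h1, h2, momA]
    refine integral_congr_ae (Filter.Eventually.of_forall fun t => ?_)
    simp [Polynomial.eval_mul, mul_comm]
  set M := stmt6M ν hmem with hM
  -- inner products in L²
  have hMinner : ∀ p q : ℝ[X], ⟪M p, M q⟫ = ∫ t, p.eval t * q.eval t ∂ν := by
    intro p q
    rw [MeasureTheory.L2.inner_def]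
    refine integral_congr_ae ?_
    filter_upwards [stmt6M_coe ν hmem p, stmt6M_coe ν hmem q] with t h1 h2
    simp [hM, h1, h2, RCLike.inner_apply, mul_comm]
  -- the norm identity
  have hnorm : ∀ p : ℝ[X], ‖(aeval T p) v‖ = ‖M p‖ := by
    intro p
    have h1 : ‖(aeval T p) v‖ ^ 2 = ‖M p‖ ^ 2 := by
      rw [← real_inner_self_eq_norm_sq, ← real_inner_self_eq_norm_sq, innB, hMinner]
    have := congrArg Real.sqrt h1
    simpa [Real.sqrt_sq (norm_nonneg _)] using this
  set f := stmt6f T v w with hf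
  have hfapp : ∀ p : ℝ[X], f p = ⟪(aeval T p) v, w⟫ := fun p => rfl
  -- the kernel of M is contained in the kernel of f
  have hker : LinearMap.ker M ≤ LinearMap.ker f := by
    intro p hp
    rw [LinearMap.mem_ker] at hp ⊢
    have h0 : (aeval T p) v = 0 := by
      have : ‖(aeval T p) v‖ = 0 := by rw [hnorm, hp, norm_zero]
      simpa using this
    rw [hfapp, h0, inner_zero_left]
  -- the induced functional on the range of M
  set gS : ↥(LinearMap.range M) →ₗ[ℝ] ℝ :=
    (Submodule.liftQ (LinearMap.ker M) f hker).comp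
      (LinearMap.quotKerEquivRange M).symm.toLinearMap with hgSdef
  have hgS : ∀ p : ℝ[X], gS ⟨M p, LinearMap.mem_range_self M p⟩ = f p := by
    intro p
    rw [hgSdef]
    simp only [LinearMap.comp_apply, LinearEquiv.coe_toLinearMap]
    rw [LinearMap.quotKerEquivRange_symm_apply_image, Submodule.mkQ_apply,
      Submodule.liftQ_apply]
  have hbound : ∀ x : ↥(LinearMap.range M), ‖gS x‖ ≤ ‖w‖ * ‖x‖ := by
    rintro ⟨x, hx⟩
    obtain ⟨p, rfl⟩ := hx
    have h1 : gS ⟨M p, LinearMap.mem_range_self M p⟩ = f p := hgS p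
    rw [h1, hfapp]
    calc ‖⟪(aeval T p) v, w⟫‖ = |⟪(aeval T p) v, w⟫| := rfl
      _ ≤ ‖(aeval T p) v‖ * ‖w‖ := abs_real_inner_le_norm _ _
      _ = ‖w‖ * ‖M p‖ := by rw [hnorm, mul_comm]
  set g : ↥(LinearMap.range M) →L[ℝ] ℝ := LinearMap.mkContinuous gS ‖w‖ hbound with hgdef
  obtain ⟨G, hG, -⟩ := exists_extension_norm_eq (LinearMap.range M) g
  set hh : Lp ℝ 2 ν := (InnerProductSpace.toDual ℝ (Lp ℝ 2 ν)).symm G with hhdef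
  have hrep : ∀ x : Lp ℝ 2 ν, ⟪hh, x⟫ = G x := fun x =>
    InnerProductSpace.toDual_symm_apply
  refine ⟨fun t => hh t, Lp.memLp hh, fun k => ?_⟩
  have e1 : ⟪(T ^ k) v, w⟫ = f (X ^ k) := by
    rw [hfapp]
    simp [Polynomial.aeval_X_pow]
  have e2 : f (X ^ k) = G (M (X ^ k)) := by
    rw [← hgS, hG ⟨M (X ^ k), LinearMap.mem_range_self M _⟩]
    rfl
  rw [e1, e2, ← hrep, MeasureTheory.L2.inner_def]
  refine integral_congr_ae ?_
  filter_upwards [stmt6M_coe ν hmem (X ^ k)] with t h1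
  simp [hM, h1, RCLike.inner_apply, mul_comm]
end

section
/- Let η be a finite measure on a measurable space and let f, g be nonnegative η-integrable functions. Set Δ₁ = ∫ |f − g| dη and s = ∫ (f + g) dη. Then ∫ (√f − √g)² dη ≥ s − √(s² − Δ₁²). -/
open MeasureTheory

/-- Lemma 3.3: for a finite measure `η` and nonnegative integrable functions `f`, `g`,
with `Δ₁ = ∫ |f - g| dη` and `s = ∫ (f + g) dη`, one has
`∫ (√f - √g)² dη ≥ s - √(s² - Δ₁²)`. -/
theorem stmt7 {α : Type*} [MeasurableSpace α] (η : Measure α) [IsFiniteMeasure η]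
    (f g : α → ℝ) (hf0 : ∀ a, 0 ≤ f a) (hg0 : ∀ a, 0 ≤ g a)
    (hf : Integrable f η) (hg : Integrable g η)
    (Δ₁ s : ℝ)
    (hΔ₁ : Δ₁ = ∫ a, |f a - g a| ∂η)
    (hs : s = ∫ a, (f a + g a) ∂η) :
    ∫ a, (Real.sqrt (f a) - Real.sqrt (g a)) ^ 2 ∂η ≥ s - Real.sqrt (s ^ 2 - Δ₁ ^ 2) := by
  set u : α → ℝ := fun a => Real.sqrt (f a) - Real.sqrt (g a) with hu
  set v : α → ℝ := fun a => Real.sqrt (f a) + Real.sqrt (g a) with hv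
  have hfg : Integrable (fun a => f a + g a) η := hf.add hg
  have hsf : AEStronglyMeasurable (fun a => Real.sqrt (f a)) η :=
    Real.continuous_sqrt.comp_aestronglyMeasurable hf.1
  have hsg : AEStronglyMeasurable (fun a => Real.sqrt (g a)) η :=
    Real.continuous_sqrt.comp_aestronglyMeasurable hg.1
  have hum : AEStronglyMeasurable u η := hsf.sub hsg
  have hvm : AEStronglyMeasurable v η := hsf.add hsg
  -- pointwise algebra
  have hsq : ∀ a, Real.sqrt (f a) ^ 2 = f a := fun a => Real.sq_sqrt (hf0 a)
  have hsqg : ∀ a, Real.sqrt (g a) ^ 2 = g a := fun a => Real.sq_sqrt (hg0 a)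
  have hub : ∀ a, u a ^ 2 ≤ f a + g a := by
    intro a
    have h1 := hsq a; have h2 := hsqg a
    have : 0 ≤ Real.sqrt (f a) * Real.sqrt (g a) :=
      mul_nonneg (Real.sqrt_nonneg _) (Real.sqrt_nonneg _)
    simp only [hu]; ring_nf; nlinarith
  have hvb : ∀ a, v a ^ 2 ≤ 2 * (f a + g a) := by
    intro a
    have h1 := hsq a; have h2 := hsqg a
    simp only [hv]; nlinarith [sq_nonneg (Real.sqrt (f a) - Real.sqrt (g a))]
  have hu2 : Integrable (fun a => u a ^ 2) η := by
    refine (hfg.mono (hum.pow 2) ?_)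
    filter_upwards with a
    rw [Real.norm_eq_abs, Real.norm_eq_abs, abs_of_nonneg (sq_nonneg _),
      abs_of_nonneg (add_nonneg (hf0 a) (hg0 a))]
    exact hub a
  have hv2 : Integrable (fun a => v a ^ 2) η := by
    refine ((hfg.const_mul 2).mono (hvm.pow 2) ?_)
    filter_upwards with a
    rw [Real.norm_eq_abs, Real.norm_eq_abs, abs_of_nonneg (sq_nonneg _),
      abs_of_nonneg (by linarith [hf0 a, hg0 a] : (0:ℝ) ≤ 2 * (f a + g a))]
    exact hvb a
  set A : ℝ := ∫ a, u a ^ 2 ∂η with hA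
  set B : ℝ := ∫ a, v a ^ 2 ∂η with hB
  have hA0 : 0 ≤ A := integral_nonneg fun a => sq_nonneg _
  have hB0 : 0 ≤ B := integral_nonneg fun a => sq_nonneg _
  have hAB : A + B = 2 * s := by
    rw [hA, hB, ← integral_add hu2 hv2, hs]
    calc ∫ a, (u a ^ 2 + v a ^ 2) ∂η = ∫ a, 2 * (f a + g a) ∂η := by
          refine integral_congr_ae (Filter.Eventually.of_forall fun a => ?_)
          have h1 := hsq a; have h2 := hsqg a
          simp only [hu, hv]; nlinarith
      _ = 2 * ∫ a, (f a + g a) ∂η := integral_const_mul 2 _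
  -- Cauchy-Schwarz: Δ₁ ≤ √A * √B
  have huL2 : MemLp (fun a => |u a|) 2 η := by
    rw [memLp_two_iff_integrable_sq (by simpa [Real.norm_eq_abs] using hum.norm)]
    simpa [sq_abs] using hu2
  have hvL2 : MemLp v 2 η := by rw [memLp_two_iff_integrable_sq hvm]; exact hv2
  have hΔeq : Δ₁ = ∫ a, |u a| * v a ∂η := by
    rw [hΔ₁]
    refine integral_congr_ae (Filter.Eventually.of_forall fun a => ?_)
    have h1 := hsq a; have h2 := hsqg a
    have hfs : f a - g a = u a * v a := by simp only [hu, hv]; nlinarith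
    have hv0 : 0 ≤ v a := add_nonneg (Real.sqrt_nonneg _) (Real.sqrt_nonneg _)
    show |f a - g a| = |u a| * v a
    rw [hfs, abs_mul, abs_of_nonneg hv0]
  have hCS : Δ₁ ≤ Real.sqrt A * Real.sqrt B := by
    have h2 : (2:ℝ).HolderConjugate 2 := by
      constructor <;> norm_num
    have h := integral_mul_le_Lp_mul_Lq_of_nonneg (μ := η) h2
      (Filter.Eventually.of_forall fun a => abs_nonneg (u a))
      (Filter.Eventually.of_forall fun a => add_nonneg (Real.sqrt_nonneg _) (Real.sqrt_nonneg _))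
      (by simpa using huL2) (by simpa using hvL2)
    rw [hΔeq]
    have hA' : ∫ a, |u a| ^ (2:ℝ) ∂η = A := by
      rw [hA]; refine integral_congr_ae (Filter.Eventually.of_forall fun a => ?_)
      show |u a| ^ (2:ℝ) = u a ^ 2
      rw [Real.rpow_two, sq_abs]
    have hB' : ∫ a, v a ^ (2:ℝ) ∂η = B := by
      rw [hB]; refine integral_congr_ae (Filter.Eventually.of_forall fun a => ?_)
      show v a ^ (2:ℝ) = v a ^ 2
      rw [Real.rpow_two]
    rw [hA', hB'] at h
    calc ∫ a, |u a| * v a ∂η ≤ A ^ ((1:ℝ)/2) * B ^ ((1:ℝ)/2) := h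
      _ = Real.sqrt A * Real.sqrt B := by
          rw [Real.sqrt_eq_rpow, Real.sqrt_eq_rpow]
  have hΔsq : Δ₁ ^ 2 ≤ A * B := by
    have h1 : 0 ≤ Δ₁ := by
      rw [hΔ₁]; exact integral_nonneg fun a => abs_nonneg _
    have := mul_self_le_mul_self h1 hCS
    calc Δ₁ ^ 2 = Δ₁ * Δ₁ := sq Δ₁
      _ ≤ (Real.sqrt A * Real.sqrt B) * (Real.sqrt A * Real.sqrt B) := this
      _ = (Real.sqrt A * Real.sqrt A) * (Real.sqrt B * Real.sqrt B) := by ring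
      _ = A * B := by rw [Real.mul_self_sqrt hA0, Real.mul_self_sqrt hB0]
  -- finish
  have hBs : B = 2 * s - A := by linarith
  have hkey : Δ₁ ^ 2 ≤ A * (2 * s - A) := by rw [← hBs]; exact hΔsq
  have hs2 : 0 ≤ s ^ 2 - Δ₁ ^ 2 := by nlinarith [sq_nonneg (s - A), hkey]
  have hr := Real.sq_sqrt hs2
  have hr0 := Real.sqrt_nonneg (s ^ 2 - Δ₁ ^ 2)
  show A ≥ s - Real.sqrt (s ^ 2 - Δ₁ ^ 2)
  nlinarith [sq_nonneg (s - A - Real.sqrt (s ^ 2 - Δ₁ ^ 2)), sq_nonneg (s - A)]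
end
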